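/- arXiv:2003.05829 — 4 statements merged into one kernel-verified Lean document; each statement's English description precedes it below -/
import Mathlib

section
/- Let k ≥ 1 be an integer. There is a constant C > 0 (depending only on k) with the following two properties. (i) If w : (0,∞) → ℝ is continuously differentiable, w(r) → 0 as r → 0, and ‖w‖_H² := ∫₀^∞ (w'(r)² + k² w(r)²/r²) r dr < ∞, then sup_{r>0} |w(r)| ≤ C ‖w‖_H. (ii) If in addition w is twice continuously differentiable and D² := ∫₀^∞ (w''(r)² + k² w'(r)²/r²) r dr < ∞, then sup_{r>0} |w(r)|/r ≤ C D and ∫₀^∞ w(r)² r^{-3} dr ≤ C² D². -/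
open MeasureTheory Set Filter
open scoped Topology ENNReal

lemma amgm (a b t : ℝ) (ht : 0 < t) : 2 * a * b ≤ b ^ 2 * t + a ^ 2 / t := by
  have h : b ^ 2 * t + a ^ 2 / t - 2 * a * b = (b * t - a) ^ 2 / t := by
    field_simp; ring
  nlinarith [div_nonneg (sq_nonneg (b * t - a)) ht.le]

lemma hk2 {k : ℕ} (hk : 1 ≤ k) : (1:ℝ) ≤ (k:ℝ) ^ 2 := by
  have : (1:ℝ) ≤ (k:ℝ) := by exact_mod_cast hk
  nlinarith

lemma le_F {k : ℕ} (hk : 1 ≤ k) (u u' : ℝ → ℝ) {t : ℝ} (ht : 0 < t) :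
    u' t ^ 2 * t + u t ^ 2 / t ≤ (u' t ^ 2 + (k:ℝ) ^ 2 * u t ^ 2 / t ^ 2) * t := by
  have hex : (u' t ^ 2 + (k:ℝ) ^ 2 * u t ^ 2 / t ^ 2) * t
      = u' t ^ 2 * t + (k:ℝ) ^ 2 * (u t ^ 2 / t) := by
    field_simp
  have h1 : u t ^ 2 / t ≤ (k:ℝ) ^ 2 * (u t ^ 2 / t) :=
    le_mul_of_one_le_left (div_nonneg (sq_nonneg _) ht.le) (hk2 hk)
  linarith

lemma habs {k : ℕ} (hk : 1 ≤ k) (u u' : ℝ → ℝ) {t : ℝ} (ht : 0 < t) :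
    |2 * u t * u' t| ≤ (u' t ^ 2 + (k:ℝ) ^ 2 * u t ^ 2 / t ^ 2) * t := by
  have h1 := amgm (u t) (u' t) t ht
  have h2 := amgm (-(u t)) (u' t) t ht
  rw [show ((-(u t)) ^ 2 : ℝ) = u t ^ 2 by ring] at h2
  have h3 := le_F hk u u' ht
  rw [abs_le]
  constructor <;> linarith

lemma Fnn {k : ℕ} (u u' : ℝ → ℝ) {t : ℝ} (ht : 0 < t) :
    0 ≤ (u' t ^ 2 + (k:ℝ) ^ 2 * u t ^ 2 / t ^ 2) * t := by positivity

lemma Inn (k : ℕ) (u u' : ℝ → ℝ) :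
    0 ≤ ∫ s in Ioi (0:ℝ), (u' s ^ 2 + (k:ℝ) ^ 2 * u s ^ 2 / s ^ 2) * s :=
  setIntegral_nonneg measurableSet_Ioi fun _ hs => Fnn u u' hs

lemma lemA (k : ℕ) (hk : 1 ≤ k) (u u' : ℝ → ℝ)
    (hd : ∀ r ∈ Ioi (0:ℝ), HasDerivAt u (u' r) r)
    (hc : ContinuousOn u' (Ioi 0))
    (h0 : Tendsto (fun s => u s ^ 2) (𝓝[>] (0:ℝ)) (𝓝 0))
    (hint : IntegrableOn (fun s => (u' s ^ 2 + (k:ℝ) ^ 2 * u s ^ 2 / s ^ 2) * s) (Ioi 0)) :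
    ∀ r ∈ Ioi (0:ℝ), u r ^ 2 ≤ ∫ s in Ioi (0:ℝ), (u' s ^ 2 + (k:ℝ) ^ 2 * u s ^ 2 / s ^ 2) * s := by
  set F : ℝ → ℝ := fun s => (u' s ^ 2 + (k:ℝ) ^ 2 * u s ^ 2 / s ^ 2) * s with hF
  set I : ℝ := ∫ s in Ioi (0:ℝ), F s with hIdef
  have hInn : 0 ≤ I := Inn k u u'
  have huc : ContinuousOn u (Ioi 0) := fun x hx => (hd x hx).continuousAt.continuousWithinAt
  intro r hr
  have key : ∀ ρ ∈ Ioo (0:ℝ) r, u r ^ 2 ≤ u ρ ^ 2 + I := by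
    intro ρ hρ
    have hsub : Icc ρ r ⊆ Ioi 0 := fun x hx => lt_of_lt_of_le hρ.1 hx.1
    have hsub' : Ioc ρ r ⊆ Ioi 0 := fun x hx => lt_trans hρ.1 hx.1
    have hgc : ContinuousOn (fun s => 2 * u s * u' s) (Icc ρ r) :=
      ((continuousOn_const.mul (huc.mono hsub)).mul (hc.mono hsub))
    have hii : IntervalIntegrable (fun s => 2 * u s * u' s) volume ρ r := by
      apply hgc.intervalIntegrable_of_Icc hρ.2.le
    have hderiv : ∀ x ∈ uIcc ρ r, HasDerivAt (fun s => u s ^ 2) (2 * u x * u' x) x := by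
      intro x hx
      rw [uIcc_of_le hρ.2.le] at hx
      have := (hd x (hsub hx)).pow 2
      refine this.congr_deriv ?_
      push_cast
      ring
    have hftc := intervalIntegral.integral_eq_sub_of_hasDerivAt hderiv hii
    rw [intervalIntegral.integral_of_le hρ.2.le] at hftc
    have hmono1 : ∫ s in Ioc ρ r, 2 * u s * u' s ≤ ∫ s in Ioc ρ r, F s := by
      apply setIntegral_mono_on hii.1 (hint.mono_set hsub') measurableSet_Ioc
      intro x hx
      have hx0 : 0 < x := hsub' hx
      have := habs hk u u' (k := k) hx0
      exact le_trans (le_abs_self _) this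
    have hmono2 : ∫ s in Ioc ρ r, F s ≤ I := by
      apply setIntegral_mono_set hint
      · filter_upwards [ae_restrict_mem measurableSet_Ioi] with x hx
        exact Fnn u u' hx
      · exact HasSubset.Subset.eventuallyLE hsub'
    linarith
  have htend : Tendsto (fun ρ => u ρ ^ 2 + I) (𝓝[>] (0:ℝ)) (𝓝 (0 + I)) :=
    h0.add_const I
  rw [zero_add] at htend
  exact ge_of_tendsto htend (by
    filter_upwards [Ioo_mem_nhdsGT_of_mem ⟨le_refl (0:ℝ), hr⟩] with ρ hρ
    exact key ρ hρ)

lemma lemB (k : ℕ) (hk : 1 ≤ k) (u u' : ℝ → ℝ)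
    (hd : ∀ r ∈ Ioi (0:ℝ), HasDerivAt u (u' r) r)
    (hc : ContinuousOn u' (Ioi 0))
    (hint : IntegrableOn (fun s => (u' s ^ 2 + (k:ℝ) ^ 2 * u s ^ 2 / s ^ 2) * s) (Ioi 0)) :
    Tendsto (fun s => u s ^ 2) (𝓝[>] (0:ℝ)) (𝓝 0) := by
  set F : ℝ → ℝ := fun s => (u' s ^ 2 + (k:ℝ) ^ 2 * u s ^ 2 / s ^ 2) * s with hFdef
  set g : ℝ → ℝ := fun t => 2 * u t * u' t with hgdef
  have huc : ContinuousOn u (Ioi 0) := fun x hx => (hd x hx).continuousAt.continuousWithinAt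
  have hgc : ContinuousOn g (Ioi 0) := (continuousOn_const.mul huc).mul hc
  have hsub01 : Ioc (0:ℝ) 1 ⊆ Ioi 0 := fun x hx => hx.1
  have hgmeas : AEStronglyMeasurable g (volume.restrict (Ioc (0:ℝ) 1)) :=
    (hgc.mono hsub01).aestronglyMeasurable measurableSet_Ioc
  have hgint : IntegrableOn g (Ioc (0:ℝ) 1) := by
    apply Integrable.mono' (hint.mono_set hsub01) hgmeas
    filter_upwards [ae_restrict_mem measurableSet_Ioc] with x hx
    exact habs hk u u' (hsub01 hx)
  -- dominated convergence
  have hdct : Tendsto (fun ρ => ∫ t in Ioc (0:ℝ) 1, (Ioi ρ).indicator g t)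
      (𝓝[>] (0:ℝ)) (𝓝 (∫ t in Ioc (0:ℝ) 1, g t)) := by
    apply tendsto_integral_filter_of_dominated_convergence (fun t => |g t|)
    · exact Eventually.of_forall fun ρ => hgmeas.indicator measurableSet_Ioi
    · exact Eventually.of_forall fun ρ => Eventually.of_forall fun t =>
        norm_indicator_le_norm_self g t
    · exact hgint.abs
    · filter_upwards [ae_restrict_mem measurableSet_Ioc] with t ht
      have hIoo : Ioo (0:ℝ) t ∈ 𝓝[>] (0:ℝ) := Ioo_mem_nhdsGT_of_mem ⟨le_refl _, ht.1⟩
      apply Tendsto.congr' _ tendsto_const_nhds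
      filter_upwards [hIoo] with ρ hρ
      exact (indicator_of_mem (mem_Ioi.2 hρ.2) g).symm
  have key : ∀ ρ ∈ Ioo (0:ℝ) 1, u ρ ^ 2 = u 1 ^ 2 - ∫ t in Ioc (0:ℝ) 1, (Ioi ρ).indicator g t := by
    intro ρ hρ
    have hsub : Icc ρ 1 ⊆ Ioi 0 := fun x hx => lt_of_lt_of_le hρ.1 hx.1
    have hii : IntervalIntegrable g volume ρ 1 :=
      (hgc.mono hsub).intervalIntegrable_of_Icc hρ.2.le
    have hderiv : ∀ x ∈ uIcc ρ 1, HasDerivAt (fun s => u s ^ 2) (g x) x := by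
      intro x hx
      rw [uIcc_of_le hρ.2.le] at hx
      have := (hd x (hsub hx)).pow 2
      refine this.congr_deriv ?_
      push_cast
      ring
    have hftc := intervalIntegral.integral_eq_sub_of_hasDerivAt hderiv hii
    rw [intervalIntegral.integral_of_le hρ.2.le] at hftc
    have hset : Ioi ρ ∩ Ioc (0:ℝ) 1 = Ioc ρ 1 := by
      ext x
      simp only [mem_inter_iff, mem_Ioi, mem_Ioc]
      exact ⟨fun h => ⟨h.1, h.2.2⟩, fun h => ⟨h.1, lt_trans hρ.1 h.1, h.2⟩⟩
    have hind : ∫ t in Ioc (0:ℝ) 1, (Ioi ρ).indicator g t = ∫ t in Ioc ρ 1, g t := by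
      rw [integral_indicator measurableSet_Ioi, Measure.restrict_restrict measurableSet_Ioi,
        hset]
    rw [hind, hftc]
    ring
  have htend : Tendsto (fun ρ => u ρ ^ 2) (𝓝[>] (0:ℝ))
      (𝓝 (u 1 ^ 2 - ∫ t in Ioc (0:ℝ) 1, g t)) := by
    apply Tendsto.congr' _ (tendsto_const_nhds.sub hdct)
    filter_upwards [Ioo_mem_nhdsGT_of_mem ⟨le_refl (0:ℝ), one_pos⟩] with ρ hρ
    exact (key ρ hρ).symm
  set L : ℝ := u 1 ^ 2 - ∫ t in Ioc (0:ℝ) 1, g t with hLdef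
  have hL0 : 0 ≤ L :=
    ge_of_tendsto htend (Eventually.of_forall fun ρ => sq_nonneg _)
  rcases eq_or_lt_of_le hL0 with hL | hL
  · rwa [← hL] at htend
  · exfalso
    have hev : ∀ᶠ ρ in 𝓝[>] (0:ℝ), L / 2 < u ρ ^ 2 :=
      htend.eventually (eventually_gt_nhds (by linarith))
    rw [eventually_nhdsWithin_iff] at hev
    rcases Metric.eventually_nhds_iff.1 hev with ⟨δ, hδ0, hδ⟩
    set t0 : ℝ := min δ 1 with ht0def
    have ht0 : 0 < t0 := lt_min hδ0 one_pos
    have hsubt : Ioo (0:ℝ) t0 ⊆ Ioi 0 := fun x hx => hx.1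
    have h1 : IntegrableOn F (Ioo (0:ℝ) t0) := hint.mono_set hsubt
    have h2 : IntegrableOn (fun x : ℝ => x⁻¹) (Ioo (0:ℝ) t0) := by
      apply Integrable.mono' (h1.const_mul (2 / L))
        (measurable_inv.aestronglyMeasurable)
      filter_upwards [ae_restrict_mem measurableSet_Ioo] with x hx
      have hx0 : 0 < x := hx.1
      have hxδ : dist x 0 < δ := by
        rw [Real.dist_eq, sub_zero, abs_of_pos hx0]
        exact lt_of_lt_of_le hx.2 (min_le_left _ _)
      have hu2 : L / 2 < u x ^ 2 := hδ hxδ (mem_Ioi.2 hx0)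
      have hFx : F x = u' x ^ 2 * x + (k:ℝ) ^ 2 * (u x ^ 2 / x) := by
        rw [hFdef]; field_simp
      have hstep : L / 2 * x⁻¹ ≤ u x ^ 2 / x := by
        rw [div_eq_mul_inv (u x ^ 2)]
        exact mul_le_mul_of_nonneg_right hu2.le (inv_nonneg.2 hx0.le)
      have hkk : u x ^ 2 / x ≤ (k:ℝ) ^ 2 * (u x ^ 2 / x) :=
        le_mul_of_one_le_left (div_nonneg (sq_nonneg _) hx0.le) (hk2 hk)
      have hFge : L / 2 * x⁻¹ ≤ F x := by nlinarith [sq_nonneg (u' x), mul_nonneg (sq_nonneg (u' x)) hx0.le]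
      rw [Real.norm_eq_abs, abs_of_pos (inv_pos.2 hx0)]
      have : x⁻¹ = (2 / L) * (L / 2 * x⁻¹) := by field_simp
      rw [this]
      exact mul_le_mul_of_nonneg_left hFge (by positivity)
    have h3 : IntegrableOn (fun x : ℝ => x ^ (-1:ℝ)) (Ioo (0:ℝ) t0) := by
      apply h2.congr
      filter_upwards [ae_restrict_mem measurableSet_Ioo] with x hx
      rw [Real.rpow_neg_one]
    rw [intervalIntegral.integrableOn_Ioo_rpow_iff ht0] at h3
    linarith

lemma bnd (w w' : ℝ → ℝ)
    (hd : ∀ r ∈ Ioi (0:ℝ), HasDerivAt w (w' r) r)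
    (hc : ContinuousOn w' (Ioi 0))
    (hw0 : Tendsto w (𝓝[>] (0:ℝ)) (𝓝 0))
    (r ε : ℝ) (hr : 0 < r) (hε : 0 ≤ ε)
    (hb : ∀ t ∈ Ioc (0:ℝ) r, |w' t| ≤ ε) : |w r| ≤ r * ε := by
  have key : ∀ σ ∈ Ioo (0:ℝ) r, |w r| ≤ |w σ| + r * ε := by
    intro σ hσ
    have hsub : Icc σ r ⊆ Ioi 0 := fun x hx => lt_of_lt_of_le hσ.1 hx.1
    have hii : IntervalIntegrable w' volume σ r :=
      (hc.mono hsub).intervalIntegrable_of_Icc hσ.2.le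
    have hftc := intervalIntegral.integral_eq_sub_of_hasDerivAt
      (fun x hx => hd x (hsub ((uIcc_of_le hσ.2.le) ▸ hx))) hii
    have hnorm : ‖∫ t in σ..r, w' t‖ ≤ ε * |r - σ| := by
      apply intervalIntegral.norm_integral_le_of_norm_le_const
      intro x hx
      rw [uIoc_of_le hσ.2.le] at hx
      rw [Real.norm_eq_abs]
      exact hb x ⟨lt_trans hσ.1 hx.1, hx.2⟩
    rw [hftc, Real.norm_eq_abs] at hnorm
    have habs' : |r - σ| = r - σ := abs_of_pos (by linarith [hσ.2])
    have : |w r| - |w σ| ≤ |w r - w σ| := abs_sub_abs_le_abs_sub _ _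
    nlinarith [mul_nonneg hε hσ.1.le]
  have htend : Tendsto (fun σ => |w σ| + r * ε) (𝓝[>] (0:ℝ)) (𝓝 (|0| + r * ε)) :=
    (hw0.abs).add_const _
  rw [abs_zero, zero_add] at htend
  exact ge_of_tendsto htend (by
    filter_upwards [Ioo_mem_nhdsGT_of_mem ⟨le_refl (0:ℝ), hr⟩] with σ hσ
    exact key σ hσ)

lemma ibp (k : ℕ) (hk : 1 ≤ k) (w w' w'' : ℝ → ℝ)
    (hdw : ∀ r ∈ Ioi (0:ℝ), HasDerivAt w (w' r) r)
    (hdw' : ∀ r ∈ Ioi (0:ℝ), HasDerivAt w' (w'' r) r)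
    (hint2 : IntegrableOn (fun s => (w'' s ^ 2 + (k:ℝ) ^ 2 * w' s ^ 2 / s ^ 2) * s) (Ioi 0))
    (ρ R : ℝ) (hρ : 0 < ρ) (hρR : ρ ≤ R) :
    ∫ s in Ioc ρ R, w s ^ 2 / s ^ 3 ≤
      w ρ ^ 2 / ρ ^ 2 + ∫ s in Ioi (0:ℝ), (w'' s ^ 2 + (k:ℝ) ^ 2 * w' s ^ 2 / s ^ 2) * s := by
  have hI2 : 0 ≤ ∫ s in Ioi (0:ℝ), (w'' s ^ 2 + (k:ℝ) ^ 2 * w' s ^ 2 / s ^ 2) * s :=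
    Inn k w' w''
  rcases eq_or_lt_of_le hρR with rfl | hlt
  · rw [Ioc_self, Measure.restrict_empty, integral_zero_measure]
    positivity
  have hsub : Icc ρ R ⊆ Ioi 0 := fun x hx => lt_of_lt_of_le hρ hx.1
  have hsub' : Ioc ρ R ⊆ Ioi 0 := fun x hx => lt_trans hρ hx.1
  have hwc : ContinuousOn w (Icc ρ R) :=
    fun x hx => ((hdw x (hsub hx)).continuousAt).continuousWithinAt
  have hw'c : ContinuousOn w' (Icc ρ R) :=
    fun x hx => ((hdw' x (hsub hx)).continuousAt).continuousWithinAt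
  have hne3 : ∀ x ∈ Icc ρ R, x ^ 3 ≠ 0 := fun x hx => pow_ne_zero _ (ne_of_gt (hsub hx))
  have hne2 : ∀ x ∈ Icc ρ R, x ^ 2 ≠ 0 := fun x hx => pow_ne_zero _ (ne_of_gt (hsub hx))
  have hne1 : ∀ x ∈ Icc ρ R, x ≠ 0 := fun x hx => ne_of_gt (hsub hx)
  have hA : ContinuousOn (fun s => w s ^ 2 / s ^ 3) (Icc ρ R) :=
    (hwc.pow 2).div ((continuous_pow 3).continuousOn) hne3
  have hB : ContinuousOn (fun s => w s * w' s / s ^ 2) (Icc ρ R) :=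
    (hwc.mul hw'c).div ((continuous_pow 2).continuousOn) hne2
  have hC : ContinuousOn (fun s => w' s ^ 2 / s) (Icc ρ R) :=
    (hw'c.pow 2).div continuousOn_id hne1
  have hAi : IntervalIntegrable (fun s => w s ^ 2 / s ^ 3) volume ρ R :=
    hA.intervalIntegrable_of_Icc hρR
  have hBi : IntervalIntegrable (fun s => w s * w' s / s ^ 2) volume ρ R :=
    hB.intervalIntegrable_of_Icc hρR
  have hCi : IntervalIntegrable (fun s => w' s ^ 2 / s) volume ρ R :=
    hC.intervalIntegrable_of_Icc hρR
  -- FTC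
  have hderiv : ∀ x ∈ uIcc ρ R, HasDerivAt (fun s => -(w s ^ 2 / (2 * s ^ 2)))
      (w x ^ 2 / x ^ 3 - w x * w' x / x ^ 2) x := by
    intro x hx
    rw [uIcc_of_le hρR] at hx
    have hx0 : 0 < x := hsub hx
    have h1 : HasDerivAt (fun s => w s ^ 2) (2 * w x * w' x) x := by
      have := (hdw x hx0).pow 2
      refine this.congr_deriv ?_
      push_cast; ring
    have h2 : HasDerivAt (fun s : ℝ => 2 * s ^ 2) (2 * (2 * x)) x := by
      have := (hasDerivAt_pow 2 x).const_mul (2:ℝ)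
      refine this.congr_deriv ?_
      push_cast; ring
    have h3 := (h1.div h2 (by positivity)).neg
    refine h3.congr_deriv ?_
    field_simp
    ring
  have hftc := intervalIntegral.integral_eq_sub_of_hasDerivAt hderiv (hAi.sub hBi)
  rw [intervalIntegral.integral_sub hAi hBi] at hftc
  -- 2B ≤ A + C
  have h2B : ∫ x in ρ..R, 2 * (w x * w' x / x ^ 2) ≤
      ∫ x in ρ..R, (w x ^ 2 / x ^ 3 + w' x ^ 2 / x) := by
    apply intervalIntegral.integral_mono_on hρR (hBi.const_mul 2) (hAi.add hCi)
    intro x hx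
    have hx0 : 0 < x := hsub hx
    have hkey : w x ^ 2 / x ^ 3 + w' x ^ 2 / x - 2 * (w x * w' x / x ^ 2)
        = (w x / x - w' x) ^ 2 / x := by
      field_simp
      ring
    nlinarith [div_nonneg (sq_nonneg (w x / x - w' x)) hx0.le]
  rw [intervalIntegral.integral_const_mul, intervalIntegral.integral_add hAi hCi] at h2B
  -- C ≤ I₂
  have hCle : ∫ x in ρ..R, w' x ^ 2 / x ≤
      ∫ s in Ioi (0:ℝ), (w'' s ^ 2 + (k:ℝ) ^ 2 * w' s ^ 2 / s ^ 2) * s := by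
    rw [intervalIntegral.integral_of_le hρR]
    have step1 : ∫ x in Ioc ρ R, w' x ^ 2 / x ≤
        ∫ x in Ioc ρ R, (w'' x ^ 2 + (k:ℝ) ^ 2 * w' x ^ 2 / x ^ 2) * x := by
      apply setIntegral_mono_on ((intervalIntegrable_iff_integrableOn_Ioc_of_le hρR).1 hCi)
        (hint2.mono_set hsub') measurableSet_Ioc
      intro x hx
      have hx0 : 0 < x := hsub' hx
      have hex : (w'' x ^ 2 + (k:ℝ) ^ 2 * w' x ^ 2 / x ^ 2) * x
          = w'' x ^ 2 * x + (k:ℝ) ^ 2 * (w' x ^ 2 / x) := by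
        field_simp
      have h1 : w' x ^ 2 / x ≤ (k:ℝ) ^ 2 * (w' x ^ 2 / x) :=
        le_mul_of_one_le_left (div_nonneg (sq_nonneg _) hx0.le) (hk2 hk)
      nlinarith [mul_nonneg (sq_nonneg (w'' x)) hx0.le]
    have step2 : ∫ x in Ioc ρ R, (w'' x ^ 2 + (k:ℝ) ^ 2 * w' x ^ 2 / x ^ 2) * x ≤
        ∫ s in Ioi (0:ℝ), (w'' s ^ 2 + (k:ℝ) ^ 2 * w' s ^ 2 / s ^ 2) * s := by
      apply setIntegral_mono_set hint2
      · filter_upwards [ae_restrict_mem measurableSet_Ioi] with x hx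
        exact Fnn w' w'' hx
      · exact HasSubset.Subset.eventuallyLE hsub'
    linarith
  have hfR : -(w R ^ 2 / (2 * R ^ 2)) ≤ 0 := neg_nonpos.2 (by positivity)
  have hfρ : -(2:ℝ) * (-(w ρ ^ 2 / (2 * ρ ^ 2))) = w ρ ^ 2 / ρ ^ 2 := by
    field_simp
  rw [← intervalIntegral.integral_of_le hρR]
  linarith

/-- pointwise bound `‖w‖_∞ ≲ ‖w‖_H`, and the second-order bounds
`‖w/r‖_∞ ≲ ‖∂_r w‖_H`, `‖w/r²‖_{L²} ≲ ‖∂_r w‖_H` for radial profiles on `(0,∞)`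
with respect to the measure `r dr`. -/
theorem stmt0 (k : ℕ) (hk : 1 ≤ k) :
    ∃ C : ℝ, 0 < C ∧
      ((∀ w w' : ℝ → ℝ,
          (∀ r ∈ Ioi (0 : ℝ), HasDerivAt w (w' r) r) →
          ContinuousOn w' (Ioi 0) →
          Tendsto w (nhdsWithin 0 (Ioi 0)) (nhds 0) →
          IntegrableOn (fun r => (w' r ^ 2 + (k : ℝ) ^ 2 * w r ^ 2 / r ^ 2) * r) (Ioi 0) →
          ∀ r ∈ Ioi (0 : ℝ),
            |w r| ≤ C * Real.sqrt
              (∫ s in Ioi (0 : ℝ), (w' s ^ 2 + (k : ℝ) ^ 2 * w s ^ 2 / s ^ 2) * s)) ∧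
       (∀ w w' w'' : ℝ → ℝ,
          (∀ r ∈ Ioi (0 : ℝ), HasDerivAt w (w' r) r) →
          (∀ r ∈ Ioi (0 : ℝ), HasDerivAt w' (w'' r) r) →
          ContinuousOn w'' (Ioi 0) →
          Tendsto w (nhdsWithin 0 (Ioi 0)) (nhds 0) →
          IntegrableOn (fun r => (w' r ^ 2 + (k : ℝ) ^ 2 * w r ^ 2 / r ^ 2) * r) (Ioi 0) →
          IntegrableOn (fun r => (w'' r ^ 2 + (k : ℝ) ^ 2 * w' r ^ 2 / r ^ 2) * r) (Ioi 0) →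
          (∀ r ∈ Ioi (0 : ℝ),
            |w r| / r ≤ C * Real.sqrt
              (∫ s in Ioi (0 : ℝ), (w'' s ^ 2 + (k : ℝ) ^ 2 * w' s ^ 2 / s ^ 2) * s)) ∧
          (∫ s in Ioi (0 : ℝ), w s ^ 2 / s ^ 3) ≤
            C ^ 2 * ∫ s in Ioi (0 : ℝ), (w'' s ^ 2 + (k : ℝ) ^ 2 * w' s ^ 2 / s ^ 2) * s)) := by
  refine ⟨1, one_pos, ?_, ?_⟩
  · intro w w' hd hc hw0 hint r hr
    have h0 : Tendsto (fun s => w s ^ 2) (𝓝[>] (0:ℝ)) (𝓝 0) := by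
      have := ((continuous_pow 2).tendsto (0:ℝ)).comp hw0
      simpa [Function.comp_def] using this
    have hA := lemA k hk w w' hd hc h0 hint r hr
    rw [one_mul, ← Real.sqrt_sq_eq_abs]
    exact Real.sqrt_le_sqrt hA
  · intro w w' w'' hdw hdw' hc'' hw0 hint1 hint2
    set F2 : ℝ → ℝ := fun s => (w'' s ^ 2 + (k:ℝ) ^ 2 * w' s ^ 2 / s ^ 2) * s with hF2def
    set I2 : ℝ := ∫ s in Ioi (0:ℝ), F2 s with hI2def
    have hI2nn : 0 ≤ I2 := Inn k w' w''
    have hw'c : ContinuousOn w' (Ioi 0) :=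
      fun x hx => (hdw' x hx).continuousAt.continuousWithinAt
    have hwc : ContinuousOn w (Ioi 0) :=
      fun x hx => (hdw x hx).continuousAt.continuousWithinAt
    have hw'0 : Tendsto (fun s => w' s ^ 2) (𝓝[>] (0:ℝ)) (𝓝 0) :=
      lemB k hk w' w'' hdw' hc'' hint2
    have hAle : ∀ t ∈ Ioi (0:ℝ), w' t ^ 2 ≤ I2 := lemA k hk w' w'' hdw' hc'' hw'0 hint2
    have hsqI : ∀ t ∈ Ioi (0:ℝ), |w' t| ≤ Real.sqrt I2 := by
      intro t ht
      rw [← Real.sqrt_sq_eq_abs]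
      exact Real.sqrt_le_sqrt (hAle t ht)
    constructor
    · intro r hr
      have hwr := bnd w w' hdw hw'c hw0 r (Real.sqrt I2) hr (Real.sqrt_nonneg _)
        (fun t ht => hsqI t ht.1)
      rw [one_mul, div_le_iff₀ hr]
      linarith [hwr]
    · -- Hardy-type inequality
      have hq : Tendsto (fun ρ => w ρ ^ 2 / ρ ^ 2) (𝓝[>] (0:ℝ)) (𝓝 0) := by
        rw [Metric.tendsto_nhdsWithin_nhds]
        intro ε hε
        have hε2 : (0:ℝ) < ε / 2 := by linarith
        obtain ⟨δ, hδ0, hδ⟩ := Metric.tendsto_nhdsWithin_nhds.1 hw'0 (ε / 2) hε2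
        refine ⟨δ, hδ0, ?_⟩
        intro x hx hxδ
        have hx0 : (0:ℝ) < x := hx
        have hxδ' : x < δ := by rwa [Real.dist_eq, sub_zero, abs_of_pos hx0] at hxδ
        have hb : ∀ t ∈ Ioc (0:ℝ) x, |w' t| ≤ Real.sqrt (ε / 2) := by
          intro t ht
          have htδ : dist t 0 < δ := by
            rw [Real.dist_eq, sub_zero, abs_of_pos ht.1]
            exact lt_of_le_of_lt ht.2 hxδ'
          have h := hδ ht.1 htδ
          rw [Real.dist_eq, sub_zero, abs_of_nonneg (sq_nonneg _)] at h
          rw [← Real.sqrt_sq_eq_abs]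
          exact Real.sqrt_le_sqrt h.le
        have hwx := bnd w w' hdw hw'c hw0 x (Real.sqrt (ε / 2)) hx0
          (Real.sqrt_nonneg _) hb
        rw [Real.dist_eq, sub_zero, abs_of_nonneg (by positivity)]
        have h1 : w x ^ 2 ≤ (x * Real.sqrt (ε / 2)) ^ 2 := by
          rw [← sq_abs (w x)]
          exact pow_le_pow_left₀ (abs_nonneg _) hwx 2
        have h2 : (x * Real.sqrt (ε / 2)) ^ 2 = x ^ 2 * (ε / 2) := by
          rw [mul_pow, Real.sq_sqrt hε2.le]
        have h3 : w x ^ 2 / x ^ 2 ≤ ε / 2 := by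
          rw [div_le_iff₀ (by positivity)]
          nlinarith
        linarith
      -- lintegral setup
      have hWc : ContinuousOn (fun s => w s ^ 2 / s ^ 3) (Ioi 0) :=
        (hwc.pow 2).div (continuous_pow 3).continuousOn
          (fun x hx => pow_ne_zero _ (ne_of_gt hx))
      set φ : ℝ → ℝ≥0∞ := fun s => ENNReal.ofReal (w s ^ 2 / s ^ 3) with hφdef
      have hφaem : AEMeasurable φ (volume.restrict (Ioi 0)) :=
        ENNReal.measurable_ofReal.comp_aemeasurable (hWc.aemeasurable measurableSet_Ioi)
      set sn : ℕ → Set ℝ := fun n => Ioc (((n:ℝ) + 1)⁻¹) ((n:ℝ) + 1) with hsndef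
      have hsn_pos : ∀ n : ℕ, (0:ℝ) < ((n:ℝ) + 1)⁻¹ := fun n => by positivity
      have hsn_le : ∀ n : ℕ, ((n:ℝ) + 1)⁻¹ ≤ (n:ℝ) + 1 := fun n =>
        le_trans (inv_le_one_of_one_le₀ (by push_cast; linarith [Nat.cast_nonneg (α := ℝ) n]))
          (by push_cast; linarith [Nat.cast_nonneg (α := ℝ) n])
      have hsn_sub : ∀ n, sn n ⊆ Ioi (0:ℝ) := fun n x hx => lt_trans (hsn_pos n) hx.1
      have hsn_mono : Monotone sn := by
        intro m n hmn
        have hmn' : (m:ℝ) ≤ (n:ℝ) := Nat.cast_le.2 hmn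
        exact Ioc_subset_Ioc (inv_anti₀ (by positivity) (by linarith)) (by linarith)
      have hIntn : ∀ n, IntegrableOn (fun s => w s ^ 2 / s ^ 3) (sn n) := by
        intro n
        have hss : Icc (((n:ℝ) + 1)⁻¹) ((n:ℝ) + 1) ⊆ Ioi 0 :=
          fun x hx => lt_of_lt_of_le (hsn_pos n) hx.1
        exact ((hWc.mono hss).integrableOn_Icc).mono_set Ioc_subset_Icc_self
      have hkey : ∀ n, ∫⁻ s in sn n, φ s ≤
          ENNReal.ofReal (w (((n:ℝ) + 1)⁻¹) ^ 2 / (((n:ℝ) + 1)⁻¹) ^ 2 + I2) := by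
        intro n
        have hnn : 0 ≤ᵐ[volume.restrict (sn n)] fun s => w s ^ 2 / s ^ 3 := by
          filter_upwards [ae_restrict_mem measurableSet_Ioc] with x hx
          have hx0 : (0:ℝ) < x := hsn_sub n hx
          positivity
        have h1 : ∫⁻ s in sn n, φ s = ENNReal.ofReal (∫ s in sn n, w s ^ 2 / s ^ 3) :=
          (ofReal_integral_eq_lintegral_ofReal (hIntn n) hnn).symm
        rw [h1]
        exact ENNReal.ofReal_le_ofReal
          (ibp k hk w w' w'' hdw hdw' hint2 _ _ (hsn_pos n) (hsn_le n))
      have hsup : ∫⁻ s in Ioi (0:ℝ), φ s = ⨆ n, ∫⁻ s in sn n, φ s := by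
        have hind : ∀ n, AEMeasurable ((sn n).indicator φ) (volume.restrict (Ioi 0)) :=
          fun n => hφaem.indicator measurableSet_Ioc
        have hmono : ∀ᵐ x ∂(volume.restrict (Ioi (0:ℝ))),
            Monotone fun n => (sn n).indicator φ x :=
          Eventually.of_forall fun x m n hmn =>
            Set.indicator_le_indicator_of_subset (hsn_mono hmn) (fun a => zero_le) x
        have hMCT := lintegral_iSup' hind hmono
        have hpt : ∀ x ∈ Ioi (0:ℝ), (⨆ n, (sn n).indicator φ x) = φ x := by
          intro x hx
          obtain ⟨n, hn⟩ : ∃ n : ℕ, x ∈ sn n := by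
            obtain ⟨n, hn⟩ := exists_nat_ge (max x⁻¹ x)
            have h1 : x⁻¹ < (n:ℝ) + 1 :=
              lt_of_le_of_lt (le_trans (le_max_left _ _) hn) (by linarith)
            have h2 : x ≤ (n:ℝ) + 1 :=
              le_trans (le_trans (le_max_right _ _) hn) (by linarith)
            exact ⟨n, inv_lt_of_inv_lt₀ hx h1, h2⟩
          apply le_antisymm
          · exact iSup_le fun m => Set.indicator_le_self _ _ x
          · exact le_iSup_of_le n (by rw [Set.indicator_of_mem hn])
        calc ∫⁻ s in Ioi (0:ℝ), φ s
            = ∫⁻ x in Ioi (0:ℝ), ⨆ n, (sn n).indicator φ x := by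
              apply lintegral_congr_ae
              filter_upwards [ae_restrict_mem measurableSet_Ioi] with x hx
              exact (hpt x hx).symm
          _ = ⨆ n, ∫⁻ x in Ioi (0:ℝ), (sn n).indicator φ x := hMCT
          _ = ⨆ n, ∫⁻ s in sn n, φ s := by
              congr 1
              funext n
              rw [lintegral_indicator (measurableSet_Ioc : MeasurableSet (sn n)) φ,
                Measure.restrict_restrict measurableSet_Ioc,
                inter_eq_self_of_subset_left (hsn_sub n)]
      have hc0 : Tendsto (fun n : ℕ => w (((n:ℝ) + 1)⁻¹) ^ 2 / (((n:ℝ) + 1)⁻¹) ^ 2 + I2)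
          atTop (𝓝 (0 + I2)) := by
        apply Tendsto.add_const
        apply hq.comp
        apply tendsto_nhdsWithin_of_tendsto_nhds_of_eventually_within
        · have := tendsto_one_div_add_atTop_nhds_zero_nat (𝕜 := ℝ)
          simpa [one_div] using this
        · exact Eventually.of_forall fun n => hsn_pos n
      have hlim1 : Tendsto (fun n => ∫⁻ s in sn n, φ s) atTop
          (𝓝 (⨆ n, ∫⁻ s in sn n, φ s)) :=
        tendsto_atTop_iSup fun m n hmn =>
          lintegral_mono' (Measure.restrict_mono (hsn_mono hmn) le_rfl) le_rfl
      have hlim2 : Tendsto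
          (fun n : ℕ => ENNReal.ofReal (w (((n:ℝ) + 1)⁻¹) ^ 2 / (((n:ℝ) + 1)⁻¹) ^ 2 + I2))
          atTop (𝓝 (ENNReal.ofReal (0 + I2))) :=
        (ENNReal.continuous_ofReal.tendsto _).comp hc0
      rw [zero_add] at hlim2
      have hle : ∫⁻ s in Ioi (0:ℝ), φ s ≤ ENNReal.ofReal I2 := by
        rw [hsup]
        exact le_of_tendsto_of_tendsto' hlim1 hlim2 hkey
      have hnn : 0 ≤ᵐ[volume.restrict (Ioi (0:ℝ))] fun s => w s ^ 2 / s ^ 3 := by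
        filter_upwards [ae_restrict_mem measurableSet_Ioi] with x hx
        have hx0 : (0:ℝ) < x := hx
        positivity
      rw [integral_eq_lintegral_of_nonneg_ae hnn
        (hWc.aestronglyMeasurable measurableSet_Ioi), one_pow, one_mul]
      exact ENNReal.toReal_le_of_le_ofReal hI2nn hle
end

section
/- Let k ≥ 4 be an integer. There is a constant C > 0 such that for all λ, μ > 0 with ν := λ/μ ≤ 1/2, writing ΛQ_{σ̲}(r) := σ^{-1} ΛQ(r/σ) and (Λ₀ΛQ)_{σ̲}(r) := σ^{-1} (Λ₀ΛQ)(r/σ), one has |∫₀^∞ ΛQ_{λ̲}(r) ΛQ_{μ̲}(r) r dr| + |∫₀^∞ (Λ₀ΛQ)_{λ̲}(r) ΛQ_{μ̲}(r) r dr| + |∫₀^∞ ΛQ_{λ̲}(r) (Λ₀ΛQ)_{μ̲}(r) r dr| ≤ C ν^{k-1}. -/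
open MeasureTheory Set Filter

noncomputable section

/-- `ΛQ(r) = 2k r^k / (1 + r^{2k})`. -/
def LamQ (k : ℕ) (r : ℝ) : ℝ := 2 * k * r ^ k / (1 + r ^ (2 * k))

/-- `Λ₀ΛQ(r) = ΛQ(r) + r (ΛQ)'(r)`. -/
def Lam0LamQ (k : ℕ) (r : ℝ) : ℝ := LamQ k r + r * deriv (LamQ k) r

namespace Stmt3Aux

lemma denom_pos (k : ℕ) (r : ℝ) : 0 < 1 + r ^ (2 * k) := by
  have h : 0 ≤ r ^ (2 * k) := by rw [mul_comm, pow_mul]; positivity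
  linarith

/-- The basic profile bound function `r^k / (1 + r^{2k})`. -/
def g (k : ℕ) (r : ℝ) : ℝ := r ^ k / (1 + r ^ (2 * k))

lemma g_le_pow (k : ℕ) {r : ℝ} (hr : 0 < r) : g k r ≤ r ^ k := by
  rw [g, div_le_iff₀ (denom_pos k r)]
  nlinarith [pow_pos hr k, pow_pos hr (2 * k)]

lemma g_le_inv (k : ℕ) {r : ℝ} (hr : 0 < r) : g k r ≤ (r ^ k)⁻¹ := by
  have hx : 0 < r ^ k := pow_pos hr k
  rw [g, div_le_iff₀ (denom_pos k r), pow_mul', inv_mul_eq_div, le_div_iff₀ hx]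
  nlinarith

lemma LamQ_eq (k : ℕ) (r : ℝ) : LamQ k r = 2 * k * g k r := by rw [LamQ, g, mul_div_assoc]

/-- Explicit derivative of `LamQ`. -/
def D (k : ℕ) (r : ℝ) : ℝ :=
  (2 * k * (k * r ^ (k - 1)) * (1 + r ^ (2 * k)) - 2 * k * r ^ k * (2 * k * r ^ (2 * k - 1))) /
    (1 + r ^ (2 * k)) ^ 2

lemma hasDerivAt_LamQ (k : ℕ) (r : ℝ) : HasDerivAt (LamQ k) (D k r) r := by
  have h1 : HasDerivAt (fun r : ℝ => 2 * (k : ℝ) * r ^ k) (2 * k * (k * r ^ (k - 1))) r := by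
    simpa [mul_assoc] using (hasDerivAt_pow k r).const_mul (2 * (k : ℝ))
  have h2 : HasDerivAt (fun r : ℝ => 1 + r ^ (2 * k)) (2 * k * r ^ (2 * k - 1)) r := by
    have := (hasDerivAt_pow (2 * k) r).const_add 1
    have hc : ((2 * k : ℕ) : ℝ) = 2 * (k : ℝ) := by push_cast; ring
    simpa [hc] using this
  exact h1.div h2 (denom_pos k r).ne'

lemma Lam0LamQ_eq (k : ℕ) : Lam0LamQ k = fun r => LamQ k r + r * D k r := by
  funext r; rw [Lam0LamQ, (hasDerivAt_LamQ k r).deriv]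

lemma continuous_LamQ (k : ℕ) : Continuous (LamQ k) := by
  apply Continuous.div (by continuity) (by continuity)
  exact fun r => (denom_pos k r).ne'

lemma continuous_Lam0LamQ (k : ℕ) : Continuous (Lam0LamQ k) := by
  rw [Lam0LamQ_eq]
  apply Continuous.add (continuous_LamQ k)
  apply Continuous.mul continuous_id
  apply Continuous.div (by continuity) (by continuity)
  exact fun r => pow_ne_zero 2 (denom_pos k r).ne'

lemma abs_LamQ_le (k : ℕ) (hk : 1 ≤ k) {r : ℝ} (hr : 0 < r) :
    |LamQ k r| ≤ 8 * k ^ 2 * g k r := by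
  have hg : 0 ≤ g k r := div_nonneg (by positivity) (denom_pos k r).le
  have hk1 : (1 : ℝ) ≤ (k : ℝ) := by exact_mod_cast hk
  rw [LamQ_eq, abs_of_nonneg (by positivity)]
  nlinarith [mul_nonneg hg (sub_nonneg.2 hk1)]

lemma abs_Lam0LamQ_le (k : ℕ) (hk : 1 ≤ k) {r : ℝ} (hr : 0 < r) :
    |Lam0LamQ k r| ≤ 8 * k ^ 2 * g k r := by
  have hd := denom_pos k r
  set x := r ^ k with hxdef
  have hx : 0 < x := pow_pos hr k
  have hx2 : r ^ (2 * k) = x ^ 2 := by rw [pow_mul']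
  have hd' : 0 < 1 + x ^ 2 := by nlinarith
  have hrk : r * r ^ (k - 1) = x := by
    rw [hxdef, ← pow_succ', Nat.sub_add_cancel hk]
  have hrk2 : r * r ^ (2 * k - 1) = x ^ 2 := by
    rw [← pow_succ', Nat.sub_add_cancel (by omega), hx2]
  have hD : r * D k r = (2 * k ^ 2 * x * (1 + x ^ 2) - 4 * k ^ 2 * x * x ^ 2) / (1 + x ^ 2) ^ 2 := by
    rw [D, hx2, mul_div_assoc']
    congr 1
    rw [mul_sub,
      show r * (2 * (k:ℝ) * ((k:ℝ) * r ^ (k - 1)) * (1 + x ^ 2)) =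
        2 * (k:ℝ) ^ 2 * (r * r ^ (k - 1)) * (1 + x ^ 2) by ring,
      show r * (2 * (k:ℝ) * r ^ k * (2 * (k:ℝ) * r ^ (2 * k - 1))) =
        4 * (k:ℝ) ^ 2 * r ^ k * (r * r ^ (2 * k - 1)) by ring, hrk, hrk2, ← hxdef]
  have key : Lam0LamQ k r =
      (2 * k * x * (1 + x ^ 2) + 2 * k ^ 2 * x * (1 + x ^ 2) - 4 * k ^ 2 * x * x ^ 2) /
        (1 + x ^ 2) ^ 2 := by
    rw [Lam0LamQ_eq]
    show LamQ k r + r * D k r = _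
    rw [hD, LamQ, hx2, ← hxdef]
    field_simp
    ring
  have hk1 : (1 : ℝ) ≤ (k : ℝ) := by exact_mod_cast hk
  have hgx : g k r = x / (1 + x ^ 2) := by rw [g, hx2, ← hxdef]
  rw [key, hgx, abs_div, abs_of_pos (by positivity : (0:ℝ) < (1 + x ^ 2) ^ 2),
    div_le_iff₀ (by positivity : (0:ℝ) < (1 + x ^ 2) ^ 2)]
  have h8 : 8 * (k:ℝ) ^ 2 * (x / (1 + x ^ 2)) * (1 + x ^ 2) ^ 2 = 8 * (k:ℝ) ^ 2 * x * (1 + x ^ 2) := by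
    field_simp
  rw [h8, abs_le]
  have hxd : 0 < x * (1 + x ^ 2) := mul_pos hx hd'
  have h1 : 0 ≤ ((k:ℝ) ^ 2 - k) * (x * (1 + x ^ 2)) :=
    mul_nonneg (by nlinarith) hxd.le
  have h2 : 0 ≤ (k:ℝ) ^ 2 * (x * x ^ 2) := by positivity
  have h3 : (k:ℝ) ^ 2 * (x * x ^ 2) ≤ (k:ℝ) ^ 2 * (x * (1 + x ^ 2)) := by
    apply mul_le_mul_of_nonneg_left _ (by positivity)
    nlinarith
  constructor
  · nlinarith
  · nlinarith

lemma bubble_le (k : ℕ) {A : ℝ} (hA : 0 ≤ A) {f : ℝ → ℝ}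
    (hb : ∀ r, 0 < r → |f r| ≤ A * g k r) {σ r : ℝ} (hσ : 0 < σ) (hr : 0 < r) :
    |σ⁻¹ * f (r / σ)| ≤ A * σ⁻¹ * (r / σ) ^ k := by
  have hs : 0 < r / σ := div_pos hr hσ
  rw [abs_mul, abs_of_pos (inv_pos.2 hσ)]
  calc σ⁻¹ * |f (r / σ)| ≤ σ⁻¹ * (A * g k (r / σ)) := by
        apply mul_le_mul_of_nonneg_left (hb _ hs) (inv_pos.2 hσ).le
    _ ≤ σ⁻¹ * (A * (r / σ) ^ k) := by
        apply mul_le_mul_of_nonneg_left _ (inv_pos.2 hσ).le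
        exact mul_le_mul_of_nonneg_left (g_le_pow k hs) hA
    _ = A * σ⁻¹ * (r / σ) ^ k := by ring

lemma bubble_le' (k : ℕ) {A : ℝ} (hA : 0 ≤ A) {f : ℝ → ℝ}
    (hb : ∀ r, 0 < r → |f r| ≤ A * g k r) {σ r : ℝ} (hσ : 0 < σ) (hr : 0 < r) :
    |σ⁻¹ * f (r / σ)| ≤ A * σ⁻¹ * (σ / r) ^ k := by
  have hs : 0 < r / σ := div_pos hr hσ
  have hinv : ((r / σ) ^ k)⁻¹ = (σ / r) ^ k := by rw [← inv_pow, inv_div]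
  rw [abs_mul, abs_of_pos (inv_pos.2 hσ)]
  calc σ⁻¹ * |f (r / σ)| ≤ σ⁻¹ * (A * g k (r / σ)) := by
        apply mul_le_mul_of_nonneg_left (hb _ hs) (inv_pos.2 hσ).le
    _ ≤ σ⁻¹ * (A * (σ / r) ^ k) := by
        apply mul_le_mul_of_nonneg_left _ (inv_pos.2 hσ).le
        refine mul_le_mul_of_nonneg_left ?_ hA
        rw [← hinv]; exact g_le_inv k hs
    _ = A * σ⁻¹ * (σ / r) ^ k := by ring

set_option maxHeartbeats 1000000 in
lemma key (k : ℕ) (hk : 4 ≤ k) (A : ℝ) (hA : 0 ≤ A) (f₁ f₂ : ℝ → ℝ)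
    (hc₁ : Continuous f₁) (hc₂ : Continuous f₂)
    (hb₁ : ∀ r, 0 < r → |f₁ r| ≤ A * g k r) (hb₂ : ∀ r, 0 < r → |f₂ r| ≤ A * g k r)
    (lam mu : ℝ) (hl : 0 < lam) (hm : 0 < mu) (hlm : lam / mu ≤ 1 / 2) :
    |∫ r in Ioi (0 : ℝ), (lam⁻¹ * f₁ (r / lam)) * (mu⁻¹ * f₂ (r / mu)) * r| ≤
      3 * A ^ 2 * (lam / mu) ^ (k - 1) := by
  have hν : 0 < lam / mu := div_pos hl hm
  have hν1 : lam / mu ≤ 1 := hlm.trans (by norm_num)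
  have hlmu : lam ≤ mu := by
    have := (div_le_iff₀ hm).1 hlm; linarith
  set P : ℝ → ℝ := fun r => (lam⁻¹ * f₁ (r / lam)) * (mu⁻¹ * f₂ (r / mu)) * r with hP
  have hPc : Continuous P := by
    apply Continuous.mul _ continuous_id
    exact (continuous_const.mul (hc₁.comp (continuous_id.div_const lam))).mul
      (continuous_const.mul (hc₂.comp (continuous_id.div_const mu)))
  set c1 : ℝ := A ^ 2 * (lam⁻¹) ^ (k + 1) * (mu⁻¹) ^ (k + 1) with hc1
  set c2 : ℝ := A ^ 2 * lam ^ (k - 1) * (mu⁻¹) ^ (k + 1) with hc2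
  set c3 : ℝ := A ^ 2 * lam ^ (k - 1) * mu ^ (k - 1) with hc3
  set e : ℝ := 1 - 2 * (k : ℝ) with he
  have hkR : (4 : ℝ) ≤ (k : ℝ) := by exact_mod_cast hk
  have he1 : e < -1 := by rw [he]; linarith
  -- pointwise region bounds
  have hprod : ∀ {a b X Y rr : ℝ}, 0 < rr → |a| ≤ X → |b| ≤ Y → |a| * |b| * rr ≤ X * Y * rr := by
    intro a b X Y rr hrr h1 h2
    apply mul_le_mul_of_nonneg_right _ hrr.le
    exact mul_le_mul h1 h2 (abs_nonneg _) ((abs_nonneg a).trans h1)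
  have habs : ∀ r : ℝ, 0 < r → |P r| = |lam⁻¹ * f₁ (r / lam)| * |mu⁻¹ * f₂ (r / mu)| * r := by
    intro r hr
    rw [hP]; simp only
    rw [abs_mul, abs_mul, abs_of_pos hr]
  have hP1 : ∀ r ∈ Ioc (0 : ℝ) lam, |P r| ≤ c1 * r ^ (2 * k + 1) := by
    intro r hr
    obtain ⟨hr0, _⟩ := hr
    rw [habs r hr0]
    calc |lam⁻¹ * f₁ (r / lam)| * |mu⁻¹ * f₂ (r / mu)| * r
        ≤ (A * lam⁻¹ * (r / lam) ^ k) * (A * mu⁻¹ * (r / mu) ^ k) * r := by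
          exact hprod hr0 (bubble_le k hA hb₁ hl hr0) (bubble_le k hA hb₂ hm hr0)
      _ = c1 * r ^ (2 * k + 1) := by
          rw [hc1, div_pow, div_pow,
            show r ^ (2 * k + 1) = r ^ k * r ^ k * r by rw [pow_succ, two_mul, pow_add],
            show (lam⁻¹) ^ (k+1) = (lam ^ k)⁻¹ * lam⁻¹ by rw [pow_succ, inv_pow],
            show (mu⁻¹) ^ (k+1) = (mu ^ k)⁻¹ * mu⁻¹ by rw [pow_succ, inv_pow]]
          field_simp
  have hP2 : ∀ r ∈ Ioc lam mu, |P r| ≤ c2 * r := by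
    intro r hr
    obtain ⟨hr1, _⟩ := hr
    have hr0 : 0 < r := hl.trans hr1
    rw [habs r hr0]
    calc |lam⁻¹ * f₁ (r / lam)| * |mu⁻¹ * f₂ (r / mu)| * r
        ≤ (A * lam⁻¹ * (lam / r) ^ k) * (A * mu⁻¹ * (r / mu) ^ k) * r := by
          exact hprod hr0 (bubble_le' k hA hb₁ hl hr0) (bubble_le k hA hb₂ hm hr0)
      _ = c2 * r := by
          rw [hc2, div_pow, div_pow,
            show lam ^ k = lam ^ (k - 1) * lam by rw [← pow_succ, Nat.sub_add_cancel (by omega)],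
            show (mu⁻¹) ^ (k+1) = (mu ^ k)⁻¹ * mu⁻¹ by rw [pow_succ, inv_pow]]
          field_simp
  have hP3 : ∀ r ∈ Ioi mu, |P r| ≤ c3 * r ^ e := by
    intro r hr
    have hr0 : 0 < r := hm.trans hr
    have hre : r ^ e = (r ^ (2 * k - 1))⁻¹ := by
      rw [← Real.rpow_natCast r (2 * k - 1), ← Real.rpow_neg hr0.le, he]
      congr 1
      push_cast [Nat.cast_sub (by omega : 1 ≤ 2 * k)]
      ring
    rw [habs r hr0, hre]
    calc |lam⁻¹ * f₁ (r / lam)| * |mu⁻¹ * f₂ (r / mu)| * r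
        ≤ (A * lam⁻¹ * (lam / r) ^ k) * (A * mu⁻¹ * (mu / r) ^ k) * r := by
          exact hprod hr0 (bubble_le' k hA hb₁ hl hr0) (bubble_le' k hA hb₂ hm hr0)
      _ = c3 * (r ^ (2 * k - 1))⁻¹ := by
          rw [hc3, div_pow, div_pow,
            show lam ^ k = lam ^ (k - 1) * lam by rw [← pow_succ, Nat.sub_add_cancel (by omega)],
            show mu ^ k = mu ^ (k - 1) * mu by rw [← pow_succ, Nat.sub_add_cancel (by omega)]]
          have hrr : r ^ k * r ^ k = r ^ (2 * k - 1) * r := by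
            rw [← pow_succ, ← pow_add]; congr 1; omega
          field_simp
          linear_combination (-(A ^ 2)) * hrr
  -- integrability
  have hM1int : IntegrableOn (fun r : ℝ => c1 * r ^ (2 * k + 1)) (Ioc (0:ℝ) lam) :=
    Continuous.integrableOn_Ioc (continuous_const.mul (continuous_pow _))
  have hM2int : IntegrableOn (fun r : ℝ => c2 * r) (Ioc lam mu) :=
    Continuous.integrableOn_Ioc (continuous_const.mul continuous_id)
  have hM3int : IntegrableOn (fun r : ℝ => c3 * r ^ e) (Ioi mu) :=
    (integrableOn_Ioi_rpow_of_lt he1 hm).const_mul c3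
  have habsc : Continuous fun r => |P r| := hPc.abs
  have hint1 : IntegrableOn (fun r => |P r|) (Ioc (0:ℝ) lam) := habsc.integrableOn_Ioc
  have hint2 : IntegrableOn (fun r => |P r|) (Ioc lam mu) := habsc.integrableOn_Ioc
  have hint3 : IntegrableOn (fun r => |P r|) (Ioi mu) := by
    refine Integrable.mono hM3int habsc.aestronglyMeasurable ?_
    filter_upwards [ae_restrict_mem measurableSet_Ioi] with r hr
    rw [Real.norm_eq_abs, Real.norm_eq_abs, abs_abs]
    exact (hP3 r hr).trans (le_abs_self _)
  have hdisj2 : Disjoint (Ioc lam mu) (Ioi mu) := Ioc_disjoint_Ioi le_rfl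
  have hdisj1 : Disjoint (Ioc (0:ℝ) lam) (Ioc lam mu ∪ Ioi mu) :=
    disjoint_union_right.2 ⟨Ioc_disjoint_Ioc_of_le le_rfl, Ioc_disjoint_Ioi hlmu⟩
  have hsplit : Ioi (0:ℝ) = Ioc 0 lam ∪ (Ioc lam mu ∪ Ioi mu) := by
    rw [Ioc_union_Ioi_eq_Ioi hlmu, Ioc_union_Ioi_eq_Ioi hl.le]
  have step1 : |∫ r in Ioi (0:ℝ), P r| ≤ ∫ r in Ioi (0:ℝ), |P r| := by
    simpa [Real.norm_eq_abs] using
      norm_integral_le_integral_norm (μ := volume.restrict (Ioi (0:ℝ))) P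
  have step2 : (∫ r in Ioi (0:ℝ), |P r|) =
      (∫ r in Ioc (0:ℝ) lam, |P r|) + ((∫ r in Ioc lam mu, |P r|) + ∫ r in Ioi mu, |P r|) := by
    rw [hsplit,
      setIntegral_union hdisj1 (measurableSet_Ioc.union measurableSet_Ioi) hint1
        (hint2.union hint3),
      setIntegral_union hdisj2 measurableSet_Ioi hint2 hint3]
  have piece1 : (∫ r in Ioc (0:ℝ) lam, |P r|) ≤ A ^ 2 * (lam / mu) ^ (k - 1) := by
    calc (∫ r in Ioc (0:ℝ) lam, |P r|) ≤ ∫ r in Ioc (0:ℝ) lam, c1 * r ^ (2 * k + 1) :=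
          setIntegral_mono_on hint1 hM1int measurableSet_Ioc hP1
      _ = c1 * ∫ x in (0:ℝ)..lam, x ^ (2 * k + 1) := by
          rw [← intervalIntegral.integral_of_le hl.le, intervalIntegral.integral_const_mul]
      _ ≤ A ^ 2 * (lam / mu) ^ (k - 1) := by
          rw [integral_pow]
          have h0 : (0:ℝ) ^ (2 * k + 1 + 1) = 0 := zero_pow (by omega)
          have hdge : (1:ℝ) ≤ (↑(2 * k + 1) : ℝ) + 1 := by push_cast; linarith
          have heq : c1 * lam ^ (2 * k + 1 + 1) = A ^ 2 * (lam / mu) ^ (k + 1) := by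
            rw [hc1, show 2 * k + 1 + 1 = (k + 1) + (k + 1) by omega, pow_add, div_eq_mul_inv,
              mul_pow]
            simp only [inv_pow]
            field_simp
            ring
          have hpow1 : (lam / mu) ^ (k + 1) ≤ (lam / mu) ^ (k - 1) :=
            pow_le_pow_of_le_one hν.le hν1 (by omega)
          have hc1nn : (0:ℝ) ≤ c1 := by rw [hc1]; positivity
          have hlamnn : (0:ℝ) ≤ lam ^ (2 * k + 1 + 1) := by positivity
          calc c1 * ((lam ^ (2 * k + 1 + 1) - 0 ^ (2 * k + 1 + 1)) / ((↑(2 * k + 1) : ℝ) + 1))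
              ≤ c1 * lam ^ (2 * k + 1 + 1) := by
                rw [h0, sub_zero]
                exact mul_le_mul_of_nonneg_left (div_le_self hlamnn hdge) hc1nn
            _ = A ^ 2 * (lam / mu) ^ (k + 1) := heq
            _ ≤ A ^ 2 * (lam / mu) ^ (k - 1) := by
                exact mul_le_mul_of_nonneg_left hpow1 (by positivity)
  have piece2 : (∫ r in Ioc lam mu, |P r|) ≤ A ^ 2 * (lam / mu) ^ (k - 1) := by
    calc (∫ r in Ioc lam mu, |P r|) ≤ ∫ r in Ioc lam mu, c2 * r :=
          setIntegral_mono_on hint2 hM2int measurableSet_Ioc hP2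
      _ = c2 * ∫ x in lam..mu, x := by
          rw [← intervalIntegral.integral_of_le hlmu, intervalIntegral.integral_const_mul]
      _ ≤ A ^ 2 * (lam / mu) ^ (k - 1) := by
          rw [integral_id]
          have hc2nn : (0:ℝ) ≤ c2 := by rw [hc2]; positivity
          have heq : c2 * mu ^ 2 = A ^ 2 * (lam / mu) ^ (k - 1) := by
            rw [hc2, div_eq_mul_inv, mul_pow, show k + 1 = (k - 1) + 2 by omega, pow_add]
            field_simp
          calc c2 * ((mu ^ 2 - lam ^ 2) / 2) ≤ c2 * mu ^ 2 := by
                apply mul_le_mul_of_nonneg_left _ hc2nn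
                nlinarith [sq_nonneg lam, sq_nonneg mu]
            _ = A ^ 2 * (lam / mu) ^ (k - 1) := heq
  have piece3 : (∫ r in Ioi mu, |P r|) ≤ A ^ 2 * (lam / mu) ^ (k - 1) := by
    calc (∫ r in Ioi mu, |P r|) ≤ ∫ r in Ioi mu, c3 * r ^ e :=
          setIntegral_mono_on hint3 hM3int measurableSet_Ioi hP3
      _ = c3 * (-mu ^ (e + 1) / (e + 1)) := by
          rw [integral_const_mul, integral_Ioi_rpow_of_lt he1 hm]
      _ ≤ A ^ 2 * (lam / mu) ^ (k - 1) := by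
          have he2 : e + 1 = 2 - 2 * (k:ℝ) := by rw [he]; ring
          have hmue : mu ^ (e + 1) = (mu ^ (2 * k - 2 : ℕ))⁻¹ := by
            rw [← Real.rpow_natCast mu (2 * k - 2), ← Real.rpow_neg hm.le]
            congr 1
            push_cast [Nat.cast_sub (by omega : 2 ≤ 2 * k)]
            rw [he2]
            ring
          have hc3nn : (0:ℝ) ≤ c3 := by rw [hc3]; positivity
          have hmupos : (0:ℝ) < mu ^ (e + 1) := Real.rpow_pos_of_pos hm _
          have heq : c3 * mu ^ (e + 1) = A ^ 2 * (lam / mu) ^ (k - 1) := by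
            rw [hc3, hmue, show (2 * k - 2 : ℕ) = (k - 1) + (k - 1) by omega, pow_add,
              div_eq_mul_inv, mul_pow]
            simp only [inv_pow]
            field_simp
          have hstep : c3 * (-mu ^ (e + 1) / (e + 1)) = c3 * mu ^ (e + 1) / (2 * (k:ℝ) - 2) := by
            have h2 : (2:ℝ) - 2 * (k:ℝ) ≠ 0 := by intro h; linarith
            have h3 : (2:ℝ) * (k:ℝ) - 2 ≠ 0 := by intro h; linarith
            generalize mu ^ (e + 1) = y
            rw [he2, show (2:ℝ) - 2 * k = -(2 * k - 2) by ring, div_neg, neg_div, neg_neg, ← mul_div_assoc]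
          calc c3 * (-mu ^ (e + 1) / (e + 1)) = c3 * mu ^ (e + 1) / (2 * (k:ℝ) - 2) := hstep
            _ ≤ c3 * mu ^ (e + 1) := div_le_self (by positivity) (by linarith)
            _ = A ^ 2 * (lam / mu) ^ (k - 1) := heq
  rw [step2] at step1
  have := add_le_add piece1 (add_le_add piece2 piece3)
  calc |∫ r in Ioi (0:ℝ), P r| ≤ _ := step1
    _ ≤ 3 * A ^ 2 * (lam / mu) ^ (k - 1) := by linarith

end Stmt3Aux

open Stmt3Aux in
/-- interaction estimates between the two bubbles:
`|⟨ΛQ_λ̲|ΛQ_μ̲⟩| + |⟨(Λ₀ΛQ)_λ̲|ΛQ_μ̲⟩| + |⟨ΛQ_λ̲|(Λ₀ΛQ)_μ̲⟩| ≲ ν^{k-1}`, `ν = λ/μ`. -/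
theorem stmt3 (k : ℕ) (hk : 4 ≤ k) :
    ∃ C : ℝ, 0 < C ∧
      ∀ lam mu : ℝ, 0 < lam → 0 < mu → lam / mu ≤ 1 / 2 →
        |∫ r in Ioi (0 : ℝ), (lam⁻¹ * LamQ k (r / lam)) * (mu⁻¹ * LamQ k (r / mu)) * r| +
        |∫ r in Ioi (0 : ℝ), (lam⁻¹ * Lam0LamQ k (r / lam)) * (mu⁻¹ * LamQ k (r / mu)) * r| +
        |∫ r in Ioi (0 : ℝ), (lam⁻¹ * LamQ k (r / lam)) * (mu⁻¹ * Lam0LamQ k (r / mu)) * r|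
          ≤ C * (lam / mu) ^ (k - 1) := by
  have hk0 : (0:ℝ) < (k:ℝ) := by
    have : 0 < k := by omega
    exact_mod_cast this
  refine ⟨9 * (8 * (k:ℝ) ^ 2) ^ 2, by positivity, ?_⟩
  intro lam mu hl hm hlm
  have hA : (0:ℝ) ≤ 8 * (k:ℝ) ^ 2 := by positivity
  have hbQ : ∀ r : ℝ, 0 < r → |LamQ k r| ≤ 8 * (k:ℝ) ^ 2 * g k r :=
    fun r hr => abs_LamQ_le k (by omega) hr
  have hbL : ∀ r : ℝ, 0 < r → |Lam0LamQ k r| ≤ 8 * (k:ℝ) ^ 2 * g k r :=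
    fun r hr => abs_Lam0LamQ_le k (by omega) hr
  have h1 := key k hk (8 * (k:ℝ) ^ 2) hA (LamQ k) (LamQ k) (continuous_LamQ k)
    (continuous_LamQ k) hbQ hbQ lam mu hl hm hlm
  have h2 := key k hk (8 * (k:ℝ) ^ 2) hA (Lam0LamQ k) (LamQ k) (continuous_Lam0LamQ k)
    (continuous_LamQ k) hbL hbQ lam mu hl hm hlm
  have h3 := key k hk (8 * (k:ℝ) ^ 2) hA (LamQ k) (Lam0LamQ k) (continuous_LamQ k)
    (continuous_Lam0LamQ k) hbQ hbL lam mu hl hm hlm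
  have heq : 3 * (8 * (k:ℝ) ^ 2) ^ 2 * (lam / mu) ^ (k - 1) +
      3 * (8 * (k:ℝ) ^ 2) ^ 2 * (lam / mu) ^ (k - 1) +
      3 * (8 * (k:ℝ) ^ 2) ^ 2 * (lam / mu) ^ (k - 1) =
      9 * (8 * (k:ℝ) ^ 2) ^ 2 * (lam / mu) ^ (k - 1) := by ring
  linarith

end
end

section
/- Let k ≥ 4 be an integer. There is a constant C > 0 such that for all λ, μ > 0 with ν := λ/μ ≤ 1/2, writing ΛQ_σ(r) := ΛQ(r/σ), one has (∫₀^∞ r^{-2} ΛQ_λ(r)⁴ ΛQ_μ(r)² r dr)^{1/2} + (∫₀^∞ r^{-2} ΛQ_λ(r)² ΛQ_μ(r)⁴ r dr)^{1/2} ≤ C ν^{k}; that is, ‖r^{-1} (ΛQ_λ)² ΛQ_μ‖_{L²} + ‖r^{-1} ΛQ_λ (ΛQ_μ)²‖_{L²} ≤ C ν^k, with L² taken with respect to r dr. -/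
open MeasureTheory Set Filter

noncomputable section

namespace Stmt4Aux

lemma denom_pos (k : ℕ) (s : ℝ) : 0 < 1 + s ^ (2 * k) := by
  have h : (0:ℝ) ≤ s ^ (2 * k) := by
    rw [pow_mul]; exact pow_nonneg (sq_nonneg s) k
  linarith

lemma lamQ_nonneg (k : ℕ) {s : ℝ} (hs : 0 ≤ s) : 0 ≤ LamQ k s :=
  div_nonneg (by positivity) (denom_pos k s).le

lemma lamQ_le_pow (k : ℕ) {s : ℝ} (hs : 0 ≤ s) : LamQ k s ≤ 2 * k * s ^ k := by
  rw [LamQ, div_le_iff₀ (denom_pos k s)]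
  have h1 : (0:ℝ) ≤ 2 * (k:ℝ) * s ^ k := by positivity
  nlinarith [mul_nonneg h1 (pow_nonneg hs (2*k))]

lemma lamQ_le_inv (k : ℕ) {s : ℝ} (hs : 0 < s) : LamQ k s ≤ 2 * k / s ^ k := by
  rw [LamQ, div_le_div_iff₀ (denom_pos k s) (pow_pos hs k)]
  have h : s ^ (2*k) = s^k * s^k := by rw [two_mul, pow_add]
  have hk0 : (0:ℝ) ≤ (k:ℝ) := Nat.cast_nonneg k
  nlinarith [pow_pos hs k]

lemma lamQ_continuous (k : ℕ) : Continuous (LamQ k) := by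
  apply Continuous.div (by continuity) (by continuity)
  exact fun s => (denom_pos k s).ne'

/-- fixed profile for the first integral -/
def H1 (k : ℕ) (s : ℝ) : ℝ := LamQ k s ^ 4 * s ^ (2*k) / s

/-- fixed profile for the second integral -/
def H2 (k : ℕ) (s : ℝ) : ℝ := LamQ k s ^ 4 / (s ^ (2*k) * s)

lemma H1_meas (k : ℕ) : Measurable (H1 k) :=
  (((lamQ_continuous k).pow 4).mul (continuous_pow _)).measurable.div measurable_id

lemma H2_meas (k : ℕ) : Measurable (H2 k) :=
  ((lamQ_continuous k).pow 4).measurable.div ((continuous_pow _).mul continuous_id).measurable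

lemma H1_nonneg (k : ℕ) {s : ℝ} (hs : 0 < s) : 0 ≤ H1 k s := by
  have h0 := lamQ_nonneg k hs.le
  rw [H1]; positivity

lemma H2_nonneg (k : ℕ) {s : ℝ} (hs : 0 < s) : 0 ≤ H2 k s := by
  have h0 := lamQ_nonneg k hs.le
  rw [H2]; positivity

/-- dominating function -/
def phi (s : ℝ) : ℝ := if s ≤ 1 then 1 else (s^2)⁻¹

lemma phi_integrable : IntegrableOn phi (Ioi (0:ℝ)) := by
  rw [← Set.Ioc_union_Ioi_eq_Ioi (zero_le_one (α := ℝ))]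
  apply MeasureTheory.IntegrableOn.union
  · have h : IntegrableOn (fun _ : ℝ => (1:ℝ)) (Ioc (0:ℝ) 1) :=
      integrableOn_const measure_Ioc_lt_top.ne
    exact h.congr_fun (fun s hs => by simp [phi, hs.2]) measurableSet_Ioc
  · have h := integrableOn_Ioi_rpow_of_lt (show (-2:ℝ) < -1 by norm_num) (zero_lt_one)
    refine h.congr_fun (fun s hs => ?_) measurableSet_Ioi
    have hs1 : (1:ℝ) < s := hs
    rw [show ((-2:ℝ)) = ((-2 : ℤ) : ℝ) by norm_num]; beta_reduce; rw [Real.rpow_intCast, phi,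
      if_neg (not_le.mpr hs1)]
    rw [zpow_neg, show ((2:ℤ)) = ((2:ℕ):ℤ) by norm_num, zpow_natCast]

lemma aux_div {s : ℝ} (hs : 0 < s) (h1 : 1 ≤ s) {a b : ℕ} (hab : a + 2 ≤ b)
    {c : ℝ} (hc : 0 ≤ c) : c * s ^ a / s ^ b ≤ c * (s^2)⁻¹ := by
  rw [← div_eq_mul_inv, div_le_div_iff₀ (pow_pos hs b) (pow_pos hs 2), mul_assoc, ← pow_add]
  exact mul_le_mul_of_nonneg_left (pow_le_pow_right₀ h1 hab) hc

lemma H1_le (k : ℕ) (hk : 1 ≤ k) {s : ℝ} (hs : 0 < s) :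
    H1 k s ≤ (2*(k:ℝ))^4 * phi s := by
  have hk4 : (0:ℝ) ≤ (2*(k:ℝ))^4 := by positivity
  by_cases h1 : s ≤ 1
  · rw [phi, if_pos h1, mul_one, H1, div_le_iff₀ hs]
    have hL : LamQ k s ^ 4 ≤ (2*(k:ℝ))^4 := by
      apply pow_le_pow_left₀ (lamQ_nonneg k hs.le)
      calc LamQ k s ≤ 2*k*s^k := lamQ_le_pow k hs.le
        _ ≤ 2*k*1 :=
            mul_le_mul_of_nonneg_left (pow_le_one₀ hs.le h1) (by positivity)
        _ = 2*k := mul_one _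
    calc LamQ k s ^ 4 * s ^ (2*k) ≤ (2*(k:ℝ))^4 * s ^ 1 :=
          mul_le_mul hL (pow_le_pow_of_le_one hs.le h1 (by omega)) (by positivity) hk4
      _ = (2*(k:ℝ))^4 * s := by rw [pow_one]
  · push_neg at h1
    rw [phi, if_neg (not_le.mpr h1)]
    have hL : LamQ k s ^ 4 ≤ (2*(k:ℝ))^4 / s^(4*k) := by
      calc LamQ k s ^ 4 ≤ (2*(k:ℝ)/s^k)^4 :=
            pow_le_pow_left₀ (lamQ_nonneg k hs.le) (lamQ_le_inv k hs) 4
        _ = (2*(k:ℝ))^4 / s^(4*k) := by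
            rw [div_pow, ← pow_mul, mul_comm k 4]
    have step1 : H1 k s ≤ (2*(k:ℝ))^4 / s^(4*k) * s^(2*k) / s := by
      rw [H1, div_le_div_iff_of_pos_right hs]
      exact mul_le_mul_of_nonneg_right hL (by positivity)
    have step2 : (2*(k:ℝ))^4 / s^(4*k) * s^(2*k) / s = (2*(k:ℝ))^4 * s^(2*k) / s^(4*k+1) := by
      rw [pow_succ]
      field_simp
      ring
    calc H1 k s ≤ (2*(k:ℝ))^4 * s^(2*k) / s^(4*k+1) := by rw [← step2]; exact step1
      _ ≤ (2*(k:ℝ))^4 * (s^2)⁻¹ := aux_div hs h1.le (by omega) hk4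

lemma H2_le (k : ℕ) (hk : 1 ≤ k) {s : ℝ} (hs : 0 < s) :
    H2 k s ≤ (2*(k:ℝ))^4 * phi s := by
  have hk4 : (0:ℝ) ≤ (2*(k:ℝ))^4 := by positivity
  have hpow : s^(2*k) * s = s^(2*k+1) := (pow_succ s (2*k)).symm
  by_cases h1 : s ≤ 1
  · rw [phi, if_pos h1, mul_one, H2, hpow, div_le_iff₀ (pow_pos hs _)]
    have hL : LamQ k s ^ 4 ≤ (2*(k:ℝ))^4 * s^(4*k) := by
      calc LamQ k s ^ 4 ≤ (2*(k:ℝ)*s^k)^4 :=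
            pow_le_pow_left₀ (lamQ_nonneg k hs.le) (lamQ_le_pow k hs.le) 4
        _ = (2*(k:ℝ))^4 * s^(4*k) := by rw [mul_pow, ← pow_mul, mul_comm k 4]
    calc LamQ k s ^ 4 ≤ (2*(k:ℝ))^4 * s^(4*k) := hL
      _ ≤ (2*(k:ℝ))^4 * s^(2*k+1) :=
          mul_le_mul_of_nonneg_left (pow_le_pow_of_le_one hs.le h1 (by omega)) hk4
  · push_neg at h1
    rw [phi, if_neg (not_le.mpr h1)]
    have hL : LamQ k s ^ 4 ≤ (2*(k:ℝ))^4 := by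
      apply pow_le_pow_left₀ (lamQ_nonneg k hs.le)
      calc LamQ k s ≤ 2*k/s^k := lamQ_le_inv k hs
        _ ≤ 2*k := div_le_self (by positivity) (one_le_pow₀ h1.le)
    calc H2 k s = LamQ k s ^ 4 / s^(2*k+1) := by rw [H2, hpow]
      _ ≤ (2*(k:ℝ))^4 / s^(2*k+1) := by gcongr
      _ = (2*(k:ℝ))^4 * s^0 / s^(2*k+1) := by rw [pow_zero, mul_one]
      _ ≤ (2*(k:ℝ))^4 * (s^2)⁻¹ := aux_div hs h1.le (by omega) hk4

lemma H1_integrable (k : ℕ) (hk : 1 ≤ k) : IntegrableOn (H1 k) (Ioi (0:ℝ)) := by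
  apply Integrable.mono' (phi_integrable.const_mul ((2*(k:ℝ))^4))
    (H1_meas k).aestronglyMeasurable
  rw [ae_restrict_iff' measurableSet_Ioi]
  filter_upwards with s hs
  rw [Real.norm_eq_abs, abs_of_nonneg (H1_nonneg k hs)]
  exact H1_le k hk hs

lemma H2_integrable (k : ℕ) (hk : 1 ≤ k) : IntegrableOn (H2 k) (Ioi (0:ℝ)) := by
  apply Integrable.mono' (phi_integrable.const_mul ((2*(k:ℝ))^4))
    (H2_meas k).aestronglyMeasurable
  rw [ae_restrict_iff' measurableSet_Ioi]
  filter_upwards with s hs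
  rw [Real.norm_eq_abs, abs_of_nonneg (H2_nonneg k hs)]
  exact H2_le k hk hs

end Stmt4Aux

open Stmt4Aux in
/-- `‖r⁻¹(ΛQ_λ)² ΛQ_μ‖_{L²} + ‖r⁻¹ ΛQ_λ (ΛQ_μ)²‖_{L²} ≤ C ν^k`,
with `ν = λ/μ ≤ 1/2` and the `L²` norm with respect to `r dr`. -/
theorem stmt4 (k : ℕ) (hk : 4 ≤ k) :
    ∃ C : ℝ, 0 < C ∧
      ∀ lam mu : ℝ, 0 < lam → 0 < mu → lam / mu ≤ 1 / 2 →
        Real.sqrt (∫ r in Ioi (0 : ℝ), LamQ k (r / lam) ^ 4 * LamQ k (r / mu) ^ 2 / r ^ 2 * r) +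
        Real.sqrt (∫ r in Ioi (0 : ℝ), LamQ k (r / lam) ^ 2 * LamQ k (r / mu) ^ 4 / r ^ 2 * r)
          ≤ C * (lam / mu) ^ k := by
  have hk1 : 1 ≤ k := by omega
  set A := ∫ s in Ioi (0:ℝ), H1 k s with hAdef
  set B := ∫ s in Ioi (0:ℝ), H2 k s with hBdef
  have hA0 : 0 ≤ A := setIntegral_nonneg measurableSet_Ioi (fun s hs => H1_nonneg k hs)
  have hB0 : 0 ≤ B := setIntegral_nonneg measurableSet_Ioi (fun s hs => H2_nonneg k hs)
  refine ⟨2*k*Real.sqrt A + 2*k*Real.sqrt B + 1, by positivity, ?_⟩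
  intro lam mu hlam hmu hnu
  set ν := lam / mu with hνdef
  have hν0 : 0 < ν := div_pos hlam hmu
  have hr0 : lam ≠ 0 := hlam.ne'
  have hm0 : mu ≠ 0 := hmu.ne'
  -- first integral
  have key1 : (∫ r in Ioi (0:ℝ), LamQ k (r / lam) ^ 4 * LamQ k (r / mu) ^ 2 / r ^ 2 * r)
      ≤ (2*(k:ℝ)*ν^k)^2 * A := by
    have hint : IntegrableOn
        (fun r => (2*(k:ℝ))^2 * ν^(2*k) * lam⁻¹ * H1 k (lam⁻¹ * r)) (Ioi (0:ℝ)) := by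
      apply Integrable.const_mul
      exact (integrableOn_Ioi_comp_mul_left_iff (H1 k) 0 (inv_pos.mpr hlam)).mpr
        (by rw [mul_zero]; exact H1_integrable k hk1)
    have hmono := integral_mono_of_nonneg (f := fun r =>
        LamQ k (r / lam) ^ 4 * LamQ k (r / mu) ^ 2 / r ^ 2 * r)
        (g := fun r => (2*(k:ℝ))^2 * ν^(2*k) * lam⁻¹ * H1 k (lam⁻¹ * r)) ?_ hint ?_
    · have hval : (∫ r in Ioi (0:ℝ), (2*(k:ℝ))^2 * ν^(2*k) * lam⁻¹ * H1 k (lam⁻¹ * r))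
          = (2*(k:ℝ))^2 * ν^(2*k) * lam⁻¹ * (lam * A) := by
        rw [MeasureTheory.integral_const_mul]
        congr 1
        rw [integral_comp_mul_left_Ioi (H1 k) 0 (inv_pos.mpr hlam)]
        simp [smul_eq_mul, inv_inv, mul_zero, hAdef]
      rw [hval] at hmono
      calc (∫ r in Ioi (0:ℝ), LamQ k (r / lam) ^ 4 * LamQ k (r / mu) ^ 2 / r ^ 2 * r)
          ≤ (2*(k:ℝ))^2 * ν^(2*k) * lam⁻¹ * (lam * A) := hmono
        _ = (2*(k:ℝ)*ν^k)^2 * A := by field_simp; ring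
    · filter_upwards [ae_restrict_mem measurableSet_Ioi] with r hr
      have hr' : (0:ℝ) < r := hr
      have h1 := lamQ_nonneg k (show (0:ℝ) ≤ r / lam by positivity)
      have h2 := lamQ_nonneg k (show (0:ℝ) ≤ r / mu by positivity)
      positivity
    · filter_upwards [ae_restrict_mem measurableSet_Ioi] with r hr
      have hr' : (0:ℝ) < r := hr
      have hrr : r ≠ 0 := hr'.ne'
      have h2 : LamQ k (r/mu) ^ 2 ≤ (2*(k:ℝ)*(r/mu)^k)^2 :=
        pow_le_pow_left₀ (lamQ_nonneg k (by positivity)) (lamQ_le_pow k (by positivity)) 2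
      calc LamQ k (r / lam) ^ 4 * LamQ k (r / mu) ^ 2 / r ^ 2 * r
          ≤ LamQ k (r / lam) ^ 4 * (2*(k:ℝ)*(r/mu)^k)^2 / r ^ 2 * r := by
            have h4 : (0:ℝ) ≤ LamQ k (r / lam) ^ 4 := by positivity
            gcongr
        _ = (2*(k:ℝ))^2 * ν^(2*k) * lam⁻¹ * H1 k (lam⁻¹ * r) := by
            rw [H1, ← div_eq_inv_mul, hνdef]
            field_simp
            have hl : lam ^ (k*2) * lam⁻¹ ^ (k*2) = 1 := by rw [← mul_pow, mul_inv_cancel₀ hr0, one_pow]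
            linear_combination (-(r^(k*2)*LamQ k (r/lam)^4*mu⁻¹^(k*2))) * hl
  -- second integral
  have key2 : (∫ r in Ioi (0:ℝ), LamQ k (r / lam) ^ 2 * LamQ k (r / mu) ^ 4 / r ^ 2 * r)
      ≤ (2*(k:ℝ)*ν^k)^2 * B := by
    have hint : IntegrableOn
        (fun r => (2*(k:ℝ))^2 * ν^(2*k) * mu⁻¹ * H2 k (mu⁻¹ * r)) (Ioi (0:ℝ)) := by
      apply Integrable.const_mul
      exact (integrableOn_Ioi_comp_mul_left_iff (H2 k) 0 (inv_pos.mpr hmu)).mpr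
        (by rw [mul_zero]; exact H2_integrable k hk1)
    have hmono := integral_mono_of_nonneg (f := fun r =>
        LamQ k (r / lam) ^ 2 * LamQ k (r / mu) ^ 4 / r ^ 2 * r)
        (g := fun r => (2*(k:ℝ))^2 * ν^(2*k) * mu⁻¹ * H2 k (mu⁻¹ * r)) ?_ hint ?_
    · have hval : (∫ r in Ioi (0:ℝ), (2*(k:ℝ))^2 * ν^(2*k) * mu⁻¹ * H2 k (mu⁻¹ * r))
          = (2*(k:ℝ))^2 * ν^(2*k) * mu⁻¹ * (mu * B) := by
        rw [MeasureTheory.integral_const_mul]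
        congr 1
        rw [integral_comp_mul_left_Ioi (H2 k) 0 (inv_pos.mpr hmu)]
        simp [smul_eq_mul, inv_inv, mul_zero, hBdef]
      rw [hval] at hmono
      calc (∫ r in Ioi (0:ℝ), LamQ k (r / lam) ^ 2 * LamQ k (r / mu) ^ 4 / r ^ 2 * r)
          ≤ (2*(k:ℝ))^2 * ν^(2*k) * mu⁻¹ * (mu * B) := hmono
        _ = (2*(k:ℝ)*ν^k)^2 * B := by field_simp; ring
    · filter_upwards [ae_restrict_mem measurableSet_Ioi] with r hr
      have hr' : (0:ℝ) < r := hr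
      have h1 := lamQ_nonneg k (show (0:ℝ) ≤ r / lam by positivity)
      have h2 := lamQ_nonneg k (show (0:ℝ) ≤ r / mu by positivity)
      positivity
    · filter_upwards [ae_restrict_mem measurableSet_Ioi] with r hr
      have hr' : (0:ℝ) < r := hr
      have hrr : r ≠ 0 := hr'.ne'
      have h2 : LamQ k (r/lam) ^ 2 ≤ (2*(k:ℝ)/(r/lam)^k)^2 :=
        pow_le_pow_left₀ (lamQ_nonneg k (by positivity)) (lamQ_le_inv k (by positivity)) 2
      calc LamQ k (r / lam) ^ 2 * LamQ k (r / mu) ^ 4 / r ^ 2 * r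
          ≤ (2*(k:ℝ)/(r/lam)^k)^2 * LamQ k (r / mu) ^ 4 / r ^ 2 * r := by
            have h4 : (0:ℝ) ≤ LamQ k (r / mu) ^ 4 := by positivity
            gcongr
        _ = (2*(k:ℝ))^2 * ν^(2*k) * mu⁻¹ * H2 k (mu⁻¹ * r) := by
            rw [H2, ← div_eq_inv_mul, hνdef]
            field_simp
            have hl : lam ^ (k*2) * lam⁻¹ ^ (k*2) = 1 := by rw [← mul_pow, mul_inv_cancel₀ hr0, one_pow]
            linear_combination (-(r^(k*2)*mu⁻¹^(k*2)*LamQ k (r/mu)^4)) * hl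
  have hs1 : Real.sqrt (∫ r in Ioi (0:ℝ),
      LamQ k (r / lam) ^ 4 * LamQ k (r / mu) ^ 2 / r ^ 2 * r) ≤ 2*(k:ℝ)*ν^k * Real.sqrt A := by
    calc Real.sqrt _ ≤ Real.sqrt ((2*(k:ℝ)*ν^k)^2 * A) := Real.sqrt_le_sqrt key1
      _ = 2*(k:ℝ)*ν^k * Real.sqrt A := by
          rw [Real.sqrt_mul (sq_nonneg _), Real.sqrt_sq (by positivity)]
  have hs2 : Real.sqrt (∫ r in Ioi (0:ℝ),
      LamQ k (r / lam) ^ 2 * LamQ k (r / mu) ^ 4 / r ^ 2 * r) ≤ 2*(k:ℝ)*ν^k * Real.sqrt B := by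
    calc Real.sqrt _ ≤ Real.sqrt ((2*(k:ℝ)*ν^k)^2 * B) := Real.sqrt_le_sqrt key2
      _ = 2*(k:ℝ)*ν^k * Real.sqrt B := by
          rw [Real.sqrt_mul (sq_nonneg _), Real.sqrt_sq (by positivity)]
  have hνk : (0:ℝ) ≤ ν^k := by positivity
  nlinarith [Real.sqrt_nonneg A, Real.sqrt_nonneg B]

end
end

section
/- There is an absolute constant C₀ > 0 with the following property. For every c > 0 and R > 0 there exists a function p : (0,∞) → ℝ which is five times continuously differentiable with locally Lipschitz fifth derivative, such that, writing Δg := g'' + g'/r for the radial Laplacian: (1) p(r) = r²/2 for r ≤ R; (2) there exists R̃ > R such that p is constant on [R̃, ∞); (3) |p'(r)| ≤ C₀ r and |p''(r)| ≤ C₀ for all r > 0; (4) p''(r) ≥ -c and p'(r)/r ≥ -c for all r > 0; (5) |r (Δp)'(r)| ≤ c for all r > 0; (6) Δ²p(r) ≤ c r^{-2} for all r > 0; (7) Δ³p(r) ≥ -c r^{-4} for all r > 0; (8) |r (p'(r)/r)'| ≤ c for all r > 0; (9) |r ( r (p'(r)/r)' )'| ≤ c for all r > 0. -/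
open MeasureTheory Set Filter

noncomputable section

open scoped ContDiff

namespace Stmt8Aux

lemma one_le_inf : (1 : WithTop ℕ∞) ≤ ∞ := by exact_mod_cast le_top

lemma five_le_inf : (5 : WithTop ℕ∞) ≤ ∞ := by
  rw [show ((5:WithTop ℕ∞)) = ((5 : ℕ∞) : WithTop ℕ∞) by rfl]
  exact_mod_cast le_top

lemma iter_deriv_const (k : ℕ) (C : ℝ) : deriv^[k + 1] (fun _ : ℝ => C) = fun _ => 0 := by
  induction k generalizing C with
  | zero => funext x; simp
  | succ n ih =>
    rw [Function.iterate_succ_apply]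
    have h : deriv (fun _ : ℝ => C) = fun _ : ℝ => (0 : ℝ) := by funext x; simp
    rw [h, ih 0]

lemma eventuallyEq_iter_deriv {f g : ℝ → ℝ} {x : ℝ} (h : f =ᶠ[nhds x] g) (k : ℕ) :
    deriv^[k] f =ᶠ[nhds x] deriv^[k] g := by
  induction k with
  | zero => exact h
  | succ n ih =>
    rw [Function.iterate_succ_apply', Function.iterate_succ_apply']
    exact ih.deriv

lemma deriv_bound_aux (k : ℕ) : ∃ Mk : ℝ, 0 ≤ Mk ∧
    ∀ x : ℝ, |deriv^[k] Real.smoothTransition x| ≤ Mk := by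
  cases k with
  | zero =>
    refine ⟨1, zero_le_one, fun x => ?_⟩
    simp only [Function.iterate_zero, id_eq]
    rw [abs_le]
    exact ⟨by linarith [Real.smoothTransition.nonneg x], Real.smoothTransition.le_one x⟩
  | succ j =>
    have hc : Continuous (deriv^[j + 1] Real.smoothTransition) :=
      ((Real.smoothTransition.contDiff (n := (⊤ : ℕ∞))).iterate_deriv (j + 1)).continuous
    obtain ⟨C, hC⟩ := (isCompact_Icc (a := (0:ℝ)) (b := 1)).exists_bound_of_continuousOn
      hc.continuousOn
    refine ⟨max C 0, le_max_right _ _, fun x => ?_⟩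
    rcases le_or_gt 0 x with h0 | h0
    · rcases le_or_gt x 1 with h1 | h1
      · exact le_trans (hC x ⟨h0, h1⟩) (le_max_left _ _)
      · have hev : Real.smoothTransition =ᶠ[nhds x] (fun _ => (1 : ℝ)) := by
          filter_upwards [Ioi_mem_nhds h1] with y hy
          exact Real.smoothTransition.one_of_one_le (le_of_lt hy)
        have := (eventuallyEq_iter_deriv hev (j + 1)).eq_of_nhds
        rw [this, iter_deriv_const]
        simp
    · have hev : Real.smoothTransition =ᶠ[nhds x] (fun _ => (0 : ℝ)) := by
        filter_upwards [Iio_mem_nhds h0] with y hy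
        exact Real.smoothTransition.zero_of_nonpos (le_of_lt hy)
      have := (eventuallyEq_iter_deriv hev (j + 1)).eq_of_nhds
      rw [this, iter_deriv_const]
      simp

lemma smooth_deriv_bound : ∃ M : ℝ, 1 ≤ M ∧ ∀ k : ℕ, k ≤ 5 → ∀ x : ℝ,
    |deriv^[k] Real.smoothTransition x| ≤ M := by
  obtain ⟨M0, h00, h0⟩ := deriv_bound_aux 0
  obtain ⟨M1, h10, h1⟩ := deriv_bound_aux 1
  obtain ⟨M2, h20, h2⟩ := deriv_bound_aux 2
  obtain ⟨M3, h30, h3⟩ := deriv_bound_aux 3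
  obtain ⟨M4, h40, h4⟩ := deriv_bound_aux 4
  obtain ⟨M5, h50, h5⟩ := deriv_bound_aux 5
  refine ⟨1 + M0 + M1 + M2 + M3 + M4 + M5, by linarith, fun k hk x => ?_⟩
  interval_cases k
  · linarith [h0 x]
  · linarith [h1 x]
  · linarith [h2 x]
  · linarith [h3 x]
  · linarith [h4 x]
  · linarith [h5 x]

lemma iter_deriv_comp_affine (a L : ℝ) :
    ∀ (k : ℕ) (C : ℝ) (g : ℝ → ℝ), ContDiff ℝ ∞ g →
      deriv^[k] (fun t => C * g ((t - a) / L)) =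
        fun t => C * (1 / L) ^ k * deriv^[k] g ((t - a) / L) := by
  intro k
  induction k with
  | zero => intro C g hg; funext t; simp
  | succ n ih =>
    intro C g hg
    have h1 : deriv (fun t => C * g ((t - a) / L)) =
        fun t => (C * (1 / L)) * deriv g ((t - a) / L) := by
      funext t
      have hinner : HasDerivAt (fun t : ℝ => (t - a) / L) (1 / L) t := by
        simpa using ((hasDerivAt_id t).sub_const a).div_const L
      have hgd : HasDerivAt g (deriv g ((t - a) / L)) ((t - a) / L) :=
        ((hg.differentiable (by simp)).differentiableAt).hasDerivAt
      have h2 : HasDerivAt (fun t : ℝ => C * g ((t - a) / L))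
          (C * (deriv g ((t - a) / L) * (1 / L))) t := (hgd.comp t hinner).const_mul C
      rw [h2.deriv]; ring
    rw [Function.iterate_succ_apply, h1,
      ih (C * (1 / L)) (deriv g) ((contDiff_infty_iff_deriv.mp hg).2)]
    funext t
    rw [Function.iterate_succ_apply]
    ring

end Stmt8Aux

/-- The two-dimensional radial Laplacian `Δg(r) = g''(r) + g'(r)/r`. -/
def radLap (g : ℝ → ℝ) : ℝ → ℝ := fun r => deriv (deriv g) r + deriv g r / r

/-- existence of the cut-off function `p = p_{c,R}` of Lemma 4.6
(`C^{5,1}` regularity, equal to `r²/2` near the origin, eventually constant,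
with all the listed pointwise bounds). -/
theorem stmt8 :
    ∃ C₀ : ℝ, 0 < C₀ ∧
      ∀ c R : ℝ, 0 < c → 0 < R →
        ∃ p : ℝ → ℝ,
          ContDiffOn ℝ 5 p (Ioi 0) ∧
          (∀ x ∈ Ioi (0 : ℝ), ∃ K : NNReal, ∃ t ∈ nhdsWithin x (Ioi 0),
            LipschitzOnWith K (iteratedDeriv 5 p) t) ∧
          (∀ r ∈ Ioc (0 : ℝ) R, p r = r ^ 2 / 2) ∧
          (∃ Rt : ℝ, R < Rt ∧ ∀ r ∈ Ici Rt, p r = p Rt) ∧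
          (∀ r ∈ Ioi (0 : ℝ), |deriv p r| ≤ C₀ * r ∧ |deriv (deriv p) r| ≤ C₀) ∧
          (∀ r ∈ Ioi (0 : ℝ), -c ≤ deriv (deriv p) r ∧ -c ≤ deriv p r / r) ∧
          (∀ r ∈ Ioi (0 : ℝ), |r * deriv (radLap p) r| ≤ c) ∧
          (∀ r ∈ Ioi (0 : ℝ), radLap (radLap p) r ≤ c / r ^ 2) ∧
          (∀ r ∈ Ioi (0 : ℝ), -(c / r ^ 4) ≤ radLap (radLap (radLap p)) r) ∧
          (∀ r ∈ Ioi (0 : ℝ), |r * deriv (fun s => deriv p s / s) r| ≤ c) ∧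
          (∀ r ∈ Ioi (0 : ℝ),
            |r * deriv (fun s => s * deriv (fun u => deriv p u / u) s) r| ≤ c) := by
  obtain ⟨M, hM1, hMb⟩ := Stmt8Aux.smooth_deriv_bound
  refine ⟨2, by norm_num, ?_⟩
  intro c R hc hR
  have hM0 : (0:ℝ) < M := by linarith
  obtain ⟨L, hL0, hL1, hLM, hLc⟩ : ∃ L : ℝ, 0 < L ∧ 1 ≤ L ∧ M ≤ L ∧ 15 * M ≤ c * L := by
    refine ⟨15 * M / c + 15 * M, by positivity, ?_, ?_, ?_⟩
    · have h1 : (0:ℝ) ≤ 15 * M / c := by positivity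
      linarith
    · have h1 : (0:ℝ) ≤ 15 * M / c := by positivity
      linarith
    · have h2 : c * (15 * M / c + 15 * M) = 15 * M + 15 * (M * c) := by
        field_simp
      rw [h2]
      nlinarith
  have hML0 : 0 ≤ M / L := by positivity
  have hKey : 15 * (M / L) ≤ c := by
    have h1 : 15 * (M / L) = 15 * M / L := by ring
    rw [h1, div_le_iff₀ hL0]
    linarith
  have hML1 : M / L ≤ 1 := by
    rw [div_le_one hL0]; exact hLM
  have hMLc : M / L ≤ c := by linarith
  set a : ℝ := Real.log R with hadef
  set ψ : ℝ → ℝ := fun t => 1 - Real.smoothTransition ((t - a) / L) with hψdef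
  have hψs : ContDiff ℝ ∞ ψ :=
    contDiff_const.sub (Real.smoothTransition.contDiff.comp
      ((contDiff_id.sub contDiff_const).div_const L))
  -- values of ψ
  have hψ_one : ∀ t ≤ a, ψ t = 1 := by
    intro t ht
    have h0 : (t - a) / L ≤ 0 := by
      apply div_nonpos_of_nonpos_of_nonneg (by linarith) hL0.le
    have := Real.smoothTransition.zero_of_nonpos h0
    simp [hψdef, this]
  have hψ_zero : ∀ t, a + L ≤ t → ψ t = 0 := by
    intro t ht
    have h0 : 1 ≤ (t - a) / L := (one_le_div hL0).2 (by linarith)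
    have := Real.smoothTransition.one_of_one_le h0
    simp [hψdef, this]
  have hψ01 : ∀ t, 0 ≤ ψ t ∧ ψ t ≤ 1 := by
    intro t
    have h1 := Real.smoothTransition.nonneg ((t - a) / L)
    have h2 := Real.smoothTransition.le_one ((t - a) / L)
    constructor <;> simp only [hψdef] <;> linarith
  -- first derivative of ψ
  have hψ1 : deriv ψ = fun t => (-(1 / L)) * deriv Real.smoothTransition ((t - a) / L) := by
    funext t
    have hinner : HasDerivAt (fun t : ℝ => (t - a) / L) (1 / L) t := by
      simpa using ((hasDerivAt_id t).sub_const a).div_const L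
    have hgd : HasDerivAt Real.smoothTransition
        (deriv Real.smoothTransition ((t - a) / L)) ((t - a) / L) :=
      (((Real.smoothTransition.contDiff (n := (⊤:ℕ∞))).differentiable
        (by simp)).differentiableAt).hasDerivAt
    have h2 : HasDerivAt ψ (-(deriv Real.smoothTransition ((t - a) / L) * (1 / L))) t :=
      by have := (hgd.comp t hinner).const_sub 1; exact this
    rw [h2.deriv]; ring
  have hψk : ∀ k : ℕ, deriv^[k + 1] ψ =
      fun t => (-(1 / L)) * (1 / L) ^ k * deriv^[k + 1] Real.smoothTransition ((t - a) / L) := by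
    intro k
    rw [Function.iterate_succ_apply, hψ1,
      Stmt8Aux.iter_deriv_comp_affine a L k (-(1 / L)) (deriv Real.smoothTransition)
        ((contDiff_infty_iff_deriv.mp (Real.smoothTransition.contDiff (n := (⊤:ℕ∞)))).2)]
    funext t
    rw [Function.iterate_succ_apply]
  have hψbd : ∀ k : ℕ, k ≤ 4 → ∀ t, |deriv^[k + 1] ψ t| ≤ M / L := by
    intro k hk t
    rw [hψk k]
    have h1 : |(-(1 / L)) * (1 / L) ^ k * deriv^[k + 1] Real.smoothTransition ((t - a) / L)|
        = (1 / L) * (1 / L) ^ k * |deriv^[k + 1] Real.smoothTransition ((t - a) / L)| := by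
      rw [abs_mul, abs_mul, abs_neg, abs_of_pos (by positivity : (0:ℝ) < 1 / L), abs_pow,
        abs_of_pos (by positivity : (0:ℝ) < 1 / L)]
    rw [h1]
    have h2 : (1 / L) ^ k ≤ 1 := pow_le_one₀ (by positivity) (by rw [div_le_one hL0]; exact hL1)
    have h3 : |deriv^[k + 1] Real.smoothTransition ((t - a) / L)| ≤ M :=
      hMb (k + 1) (by omega) _
    have h4 : (1 / L) * (1 / L) ^ k * |deriv^[k + 1] Real.smoothTransition ((t - a) / L)|
        ≤ (1 / L) * 1 * M := by
      apply mul_le_mul _ h3 (abs_nonneg _) (by positivity)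
      apply mul_le_mul le_rfl h2 (by positivity) (by positivity)
    calc (1 / L) * (1 / L) ^ k * |deriv^[k + 1] Real.smoothTransition ((t - a) / L)|
        ≤ (1 / L) * 1 * M := h4
      _ = M / L := by ring
  -- derivative of the composition with log
  have heD : ∀ (k : ℕ) (r : ℝ), r ≠ 0 →
      HasDerivAt (fun s => deriv^[k] ψ (Real.log s)) (deriv^[k + 1] ψ (Real.log r) / r) r := by
    intro k r hr
    have h1 : HasDerivAt (deriv^[k] ψ) (deriv^[k + 1] ψ (Real.log r)) (Real.log r) := by
      have h0 := (((hψs.iterate_deriv k).differentiable (by simp)).differentiableAt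
        (x := Real.log r)).hasDerivAt
      rwa [← Function.iterate_succ_apply' deriv k ψ] at h0
    have h2 := Real.hasDerivAt_log hr
    have h3 := h1.comp r h2
    simpa [Function.comp_def, div_eq_mul_inv] using h3
  -- the function q = deriv p
  set q : ℝ → ℝ := fun r => r * ψ (Real.log r) with hqdef
  have hq_cont : Continuous q := by
    rw [continuous_iff_continuousAt]
    intro x
    by_cases hx : x = 0
    · subst hx
      have hq0 : q 0 = 0 := by simp [hqdef]
      unfold ContinuousAt
      rw [hq0]
      have habs : Tendsto (fun t : ℝ => |t|) (nhds 0) (nhds 0) := by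
        simpa using continuous_abs.tendsto (0:ℝ)
      refine squeeze_zero_norm (fun t => ?_) habs
      have h1 := (hψ01 (Real.log t)).1
      have h2 := (hψ01 (Real.log t)).2
      simp only [hqdef, Real.norm_eq_abs, abs_mul]
      calc |t| * |ψ (Real.log t)| ≤ |t| * 1 := by
            apply mul_le_mul le_rfl (abs_le.2 ⟨by linarith, h2⟩) (abs_nonneg _) (abs_nonneg _)
        _ = |t| := by ring
    · exact (continuousAt_id.mul ((hψs.continuous.continuousAt).comp
        (Real.continuousAt_log hx)))
  set p : ℝ → ℝ := fun r => ∫ t in (0:ℝ)..r, q t with hpdef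
  have hp' : ∀ r : ℝ, HasDerivAt p (q r) r := by
    intro r
    exact (hq_cont.integral_hasStrictDerivAt 0 r).hasDerivAt
  have hdp : deriv p = q := funext fun r => (hp' r).deriv
  -- abbreviation for the iterated log-derivatives
  set E : ℕ → ℝ → ℝ := fun k r => deriv^[k] ψ (Real.log r) with hEdef
  have hED : ∀ (k : ℕ) (r : ℝ), r ≠ 0 → HasDerivAt (E k) (E (k + 1) r / r) r :=
    fun k r hr => heD k r hr
  have hEbd : ∀ k : ℕ, k ≤ 4 → ∀ r : ℝ, |E (k + 1) r| ≤ M / L := fun k hk r => hψbd k hk _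
  have hE0 : ∀ r : ℝ, 0 ≤ E 0 r ∧ E 0 r ≤ 1 := fun r => hψ01 _
  have hqE : ∀ r : ℝ, q r = r * E 0 r := fun r => rfl
  -- derivative of q on the positive axis
  have hq' : ∀ r : ℝ, 0 < r → HasDerivAt q (E 0 r + E 1 r) r := by
    intro r hr
    have h1 : HasDerivAt (fun s : ℝ => s * E 0 s) (1 * E 0 r + r * (E 1 r / r)) r :=
      (hasDerivAt_id r).mul (hED 0 r hr.ne')
    have h2 : 1 * E 0 r + r * (E 1 r / r) = E 0 r + E 1 r := by field_simp
    rw [h2] at h1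
    exact h1
  have h2p : ∀ r : ℝ, 0 < r → deriv (deriv p) r = E 0 r + E 1 r := by
    intro r hr
    rw [hdp]
    exact (hq' r hr).deriv
  have derivIoi : ∀ (u v : ℝ → ℝ) (r : ℝ), 0 < r →
      (∀ s : ℝ, 0 < s → u s = v s) → deriv u r = deriv v r := by
    intro u v r hr h
    apply Filter.EventuallyEq.deriv_eq
    filter_upwards [Ioi_mem_nhds hr] with s hs
    exact h s hs
  -- the radial Laplacian and its iterates
  have hrad1 : ∀ s : ℝ, 0 < s → radLap p s = 2 * E 0 s + E 1 s := by
    intro s hs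
    show deriv (deriv p) s + deriv p s / s = _
    rw [h2p s hs, hdp, hqE s, mul_div_cancel_left₀ _ hs.ne']
    ring
  have hrad1' : ∀ r : ℝ, 0 < r → deriv (radLap p) r = (2 * E 1 r + E 2 r) / r := by
    intro r hr
    rw [derivIoi (radLap p) (fun s => 2 * E 0 s + E 1 s) r hr hrad1]
    have h1 : HasDerivAt (fun s => 2 * E 0 s + E 1 s) (2 * (E 1 r / r) + E 2 r / r) r :=
      ((hED 0 r hr.ne').const_mul 2).add (hED 1 r hr.ne')
    rw [h1.deriv]
    ring
  have hrad2 : ∀ s : ℝ, 0 < s → radLap (radLap p) s = (2 * E 2 s + E 3 s) / s ^ 2 := by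
    intro r hr
    show deriv (deriv (radLap p)) r + deriv (radLap p) r / r = _
    rw [derivIoi (deriv (radLap p)) (fun s => (2 * E 1 s + E 2 s) / s) r hr hrad1',
      hrad1' r hr]
    have hnum : HasDerivAt (fun s => 2 * E 1 s + E 2 s) (2 * (E 2 r / r) + E 3 r / r) r :=
      ((hED 1 r hr.ne').const_mul 2).add (hED 2 r hr.ne')
    have h1 : HasDerivAt (fun s => (2 * E 1 s + E 2 s) / s)
        (((2 * (E 2 r / r) + E 3 r / r) * r - (2 * E 1 r + E 2 r) * 1) / r ^ 2) r :=
      hnum.div (hasDerivAt_id r) hr.ne'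
    rw [h1.deriv]
    field_simp
    ring
  have hrad2' : ∀ s : ℝ, 0 < s →
      deriv (radLap (radLap p)) s = (E 4 s - 4 * E 2 s) / s ^ 3 := by
    intro r hr
    rw [derivIoi (radLap (radLap p)) (fun s => (2 * E 2 s + E 3 s) / s ^ 2) r hr hrad2]
    have hnum : HasDerivAt (fun s => 2 * E 2 s + E 3 s) (2 * (E 3 r / r) + E 4 r / r) r :=
      ((hED 2 r hr.ne').const_mul 2).add (hED 3 r hr.ne')
    have hden : HasDerivAt (fun s : ℝ => s ^ 2) (2 * r) r := by
      simpa using hasDerivAt_pow 2 r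
    have h1 : HasDerivAt (fun s => (2 * E 2 s + E 3 s) / s ^ 2)
        (((2 * (E 3 r / r) + E 4 r / r) * r ^ 2 - (2 * E 2 r + E 3 r) * (2 * r)) / (r ^ 2) ^ 2)
        r := hnum.div hden (by positivity)
    rw [h1.deriv]
    field_simp
    ring
  have hrad3 : ∀ s : ℝ, 0 < s → radLap (radLap (radLap p)) s
      = (E 5 s - 2 * E 4 s - 4 * E 3 s + 8 * E 2 s) / s ^ 4 := by
    intro r hr
    show deriv (deriv (radLap (radLap p))) r + deriv (radLap (radLap p)) r / r = _
    rw [derivIoi (deriv (radLap (radLap p))) (fun s => (E 4 s - 4 * E 2 s) / s ^ 3) r hr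
      hrad2', hrad2' r hr]
    have hnum : HasDerivAt (fun s => E 4 s - 4 * E 2 s) (E 5 r / r - 4 * (E 3 r / r)) r :=
      (hED 4 r hr.ne').sub ((hED 2 r hr.ne').const_mul 4)
    have hden : HasDerivAt (fun s : ℝ => s ^ 3) (3 * r ^ 2) r := by
      have h0 := hasDerivAt_pow 3 r
      norm_num at h0
      exact h0
    have h1 : HasDerivAt (fun s => (E 4 s - 4 * E 2 s) / s ^ 3)
        (((E 5 r / r - 4 * (E 3 r / r)) * r ^ 3 - (E 4 r - 4 * E 2 r) * (3 * r ^ 2)) /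
          (r ^ 3) ^ 2) r := hnum.div hden (by positivity)
    rw [h1.deriv]
    field_simp
    ring
  -- regularity of q and p
  have hqCD : ContDiffOn ℝ ∞ q (Ioi 0) := by
    apply ContDiffOn.mul contDiffOn_id
    exact hψs.comp_contDiffOn (Real.contDiffOn_log.mono (fun x hx => ne_of_gt hx))
  have hpCD : ContDiffOn ℝ ∞ p (Ioi 0) := by
    rw [contDiffOn_infty_iff_deriv_of_isOpen isOpen_Ioi]
    exact ⟨fun x hx => (hp' x).differentiableAt.differentiableWithinAt,
      by rw [hdp]; exact hqCD⟩
  have hqIter : ∀ k : ℕ, ContDiffOn ℝ ∞ (deriv^[k] q) (Ioi 0) := by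
    intro k
    induction k with
    | zero => exact hqCD
    | succ n ih =>
      rw [Function.iterate_succ_apply']
      exact ((contDiffOn_infty_iff_deriv_of_isOpen isOpen_Ioi).1 ih).2
  refine ⟨p, hpCD.of_le Stmt8Aux.five_le_inf, ?_, ?_, ?_, ?_, ?_, ?_, ?_, ?_, ?_, ?_⟩
  · -- local Lipschitz continuity of the fifth derivative
    intro x hx
    have hA : ContDiffAt ℝ 1 (deriv^[4] q) x :=
      ((hqIter 4).contDiffAt (isOpen_Ioi.mem_nhds hx)).of_le Stmt8Aux.one_le_inf
    obtain ⟨K, t, ht, hlip⟩ := hA.exists_lipschitzOnWith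
    refine ⟨K, t, mem_nhdsWithin_of_mem_nhds ht, ?_⟩
    have h5 : iteratedDeriv 5 p = deriv^[4] q := by
      rw [iteratedDeriv_eq_iterate, show (5 : ℕ) = 4 + 1 from rfl,
        Function.iterate_succ_apply, hdp]
    rw [h5]
    exact hlip
  · -- p r = r^2/2 for r ≤ R
    intro r hr
    have hcong : EqOn (fun t => q t) (fun t => t) (uIcc (0:ℝ) r) := by
      intro t ht
      rw [uIcc_of_le hr.1.le] at ht
      rcases eq_or_lt_of_le ht.1 with h | h
      · rw [← h]; simp [hqdef]
      · have hlog : Real.log t ≤ a := by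
          rw [hadef]
          exact Real.log_le_log h (le_trans ht.2 hr.2)
        show q t = t
        rw [show q t = t * ψ (Real.log t) from rfl, hψ_one _ hlog, mul_one]
    show (∫ t in (0:ℝ)..r, q t) = r ^ 2 / 2
    rw [intervalIntegral.integral_congr hcong]
    simp
  · -- p is eventually constant
    refine ⟨R * Real.exp L, ?_, ?_⟩
    · have h1 : 1 < Real.exp L := by
        rw [← Real.exp_zero]
        exact Real.exp_lt_exp.2 hL0
      nlinarith
    · intro r hrm
      have hrm' : R * Real.exp L ≤ r := hrm
      have hRt0 : 0 < R * Real.exp L := by positivity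
      have hzero : ∫ t in (R * Real.exp L)..r, q t = 0 := by
        have hcong : EqOn (fun t => q t) (fun _ => (0:ℝ)) (uIcc (R * Real.exp L) r) := by
          intro t ht
          rw [uIcc_of_le hrm'] at ht
          have ht0 : 0 < t := lt_of_lt_of_le hRt0 ht.1
          have hlog : a + L ≤ Real.log t := by
            have h2 : Real.log (R * Real.exp L) = a + L := by
              rw [Real.log_mul (ne_of_gt hR) (Real.exp_ne_zero L), Real.log_exp, hadef]
            rw [← h2]
            exact Real.log_le_log hRt0 ht.1
          show q t = 0
          rw [show q t = t * ψ (Real.log t) from rfl, hψ_zero _ hlog, mul_zero]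
        rw [intervalIntegral.integral_congr hcong]
        simp
      have hsplit := intervalIntegral.integral_add_adjacent_intervals
        (hq_cont.intervalIntegrable (μ := volume) 0 (R * Real.exp L))
        (hq_cont.intervalIntegrable (μ := volume) (R * Real.exp L) r)
      show (∫ t in (0:ℝ)..r, q t) = ∫ t in (0:ℝ)..(R * Real.exp L), q t
      rw [← hsplit, hzero, add_zero]
  · -- gradient bounds
    intro r hr
    have hr0 : (0:ℝ) < r := hr
    constructor
    · rw [hdp, hqE r, abs_mul, abs_of_pos hr0]
      have h1 := hE0 r
      have h2 : |E 0 r| ≤ 1 := abs_le.2 ⟨by linarith, h1.2⟩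
      nlinarith
    · rw [h2p r hr0]
      have h1 := hE0 r
      have h2 : |E 0 r| ≤ 1 := abs_le.2 ⟨by linarith, h1.2⟩
      calc |E 0 r + E 1 r| ≤ |E 0 r| + |E 1 r| := abs_add_le _ _
        _ ≤ 1 + M / L := add_le_add h2 (hEbd 0 (by norm_num) r)
        _ ≤ 2 := by linarith
  · -- semiconvexity bounds
    intro r hr
    have hr0 : (0:ℝ) < r := hr
    have h1 := hE0 r
    have h2 := abs_le.1 (hEbd 0 (by norm_num) r)
    constructor
    · rw [h2p r hr0]
      linarith
    · rw [hdp, hqE r, mul_div_cancel_left₀ _ hr0.ne']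
      linarith
  · -- |r (Δp)'| ≤ c
    intro r hr
    have hr0 : (0:ℝ) < r := hr
    rw [hrad1' r hr0, mul_div_cancel₀ _ hr0.ne']
    have h1 := hEbd 0 (by norm_num) r
    have h2 := hEbd 1 (by norm_num) r
    calc |2 * E 1 r + E 2 r| ≤ |2 * E 1 r| + |E 2 r| := abs_add_le _ _
      _ = 2 * |E 1 r| + |E 2 r| := by rw [abs_mul]; norm_num
      _ ≤ 2 * (M / L) + M / L := by linarith
      _ ≤ c := by linarith
  · -- Δ²p ≤ c r⁻²
    intro r hr
    have hr0 : (0:ℝ) < r := hr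
    rw [hrad2 r hr0]
    have h1 := abs_le.1 (hEbd 1 (by norm_num) r)
    have h2 := abs_le.1 (hEbd 2 (by norm_num) r)
    have hnum : 2 * E 2 r + E 3 r ≤ c := by linarith
    gcongr
  · -- Δ³p ≥ -c r⁻⁴
    intro r hr
    have hr0 : (0:ℝ) < r := hr
    rw [hrad3 r hr0, ← neg_div]
    have h1 := abs_le.1 (hEbd 1 (by norm_num) r)
    have h2 := abs_le.1 (hEbd 2 (by norm_num) r)
    have h3 := abs_le.1 (hEbd 3 (by norm_num) r)
    have h4 := abs_le.1 (hEbd 4 (by norm_num) r)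
    have hnum : -c ≤ E 5 r - 2 * E 4 r - 4 * E 3 r + 8 * E 2 r := by linarith
    gcongr
  · -- |r (p'/r)'| ≤ c
    intro r hr
    have hr0 : (0:ℝ) < r := hr
    simp only [hdp]
    rw [derivIoi (fun s => q s / s) (E 0) r hr0
      (fun s hs => by show q s / s = E 0 s; rw [show q s = s * E 0 s from rfl, mul_div_cancel_left₀ _ hs.ne'])]
    have hd0 : deriv (E 0) r = E 1 r / r := (hED 0 r hr0.ne').deriv
    rw [hd0, mul_div_cancel₀ _ hr0.ne']
    exact le_trans (hEbd 0 (by norm_num) r) hMLc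
  · -- |r (r (p'/r)')'| ≤ c
    intro r hr
    have hr0 : (0:ℝ) < r := hr
    simp only [hdp]
    have hinner : ∀ s : ℝ, 0 < s →
        (fun s => s * deriv (fun u => q u / u) s) s = E 1 s := by
      intro s hs
      have h1 : deriv (fun u => q u / u) s = E 1 s / s := by
        rw [derivIoi (fun u => q u / u) (E 0) s hs
          (fun u hu => by show q u / u = E 0 u; rw [show q u = u * E 0 u from rfl, mul_div_cancel_left₀ _ hu.ne'])]
        exact (hED 0 s hs.ne').deriv
      show s * deriv (fun u => q u / u) s = E 1 s
      rw [h1, mul_div_cancel₀ _ hs.ne']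
    rw [derivIoi (fun s => s * deriv (fun u => q u / u) s) (E 1) r hr0 hinner]
    have hd1 : deriv (E 1) r = E 2 r / r := (hED 1 r hr0.ne').deriv
    rw [hd1, mul_div_cancel₀ _ hr0.ne']
    exact le_trans (hEbd 1 (by norm_num) r) hMLc

end
end
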